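/- Let G=(V,E) be a directed graph, possibly cyclic, whose node set is partitioned as V = O ∪ L into observed and latent nodes, with distinct observed nodes X,Y ∈ O satisfying the pre-treatment assumption (De(Y)=∅ and Ch(X) ⊆ {Y}). Then there exists a subset Z ⊆ O\{X,Y} that is a backdoor adjustment set for (X,Y) if and only if there exists a subset Z ⊆ MB_σ^G(Y)\{X} that is a backdoor adjustment set for (X,Y). -/

import Mathlib

/-- A directed graph (loopless, possibly cyclic). -/
structure DiGraph (V : Type) where
  Edge : V → V → Prop
  loopless : ∀ v, ¬ Edge v v

namespace DiGraph

variable {V : Type}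

/-- Reachability by a directed path (possibly of length zero). -/
def reach (G : DiGraph V) : V → V → Prop := Relation.ReflTransGen G.Edge

/-- Ancestors of a set: nodes admitting a directed path (possibly of length zero)
to some node of the set. -/
def anc (G : DiGraph V) (S : Set V) : Set V := {Z | ∃ s ∈ S, G.reach Z s}

/-- The strongly connected component of a node. -/
def scc (G : DiGraph V) (X : V) : Set V := {Z | G.reach X Z ∧ G.reach Z X}

/-- Descendants: nodes `Z ≠ X` with a directed path from `X` to `Z`. -/
def de (G : DiGraph V) (X : V) : Set V := {Z | Z ≠ X ∧ Relation.TransGen G.Edge X Z}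

/-- Children of a node. -/
def ch (G : DiGraph V) (X : V) : Set V := {Z | G.Edge X Z}

/-- A directed graph is acyclic (a DAG) if it has no directed cycles. -/
def Acyclic (G : DiGraph V) : Prop := ∀ v, ¬ Relation.TransGen G.Edge v v

end DiGraph

/-- A path between `X` and `Y` in `G`: a sequence of `k+2` distinct nodes,
where consecutive nodes are joined by an edge of `G` in one of the two
orientations (recorded by `dir`: `dir i = true` means the edge
`node i → node (i+1)` is used, `dir i = false` means `node (i+1) → node i`). -/
structure GPath {V : Type} (G : DiGraph V) (X Y : V) where
  k : ℕ
  node : Fin (k + 2) → V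
  dir : Fin (k + 1) → Bool
  inj : Function.Injective node
  first : node 0 = X
  last : node (Fin.last (k + 1)) = Y
  adj : ∀ i : Fin (k + 1),
    (dir i = true → G.Edge (node i.castSucc) (node i.succ)) ∧
    (dir i = false → G.Edge (node i.succ) (node i.castSucc))

namespace GPath

variable {V : Type} {G : DiGraph V} {X Y : V}

/-- The `j`-th interior (non-endpoint) node of the path (position `j+1`). -/
def inner (p : GPath G X Y) (j : Fin p.k) : V := p.node j.succ.castSucc

/-- The interior node at position `j+1` is a collider: both incident edges
of the path point into it. -/
def isCollider (p : GPath G X Y) (j : Fin p.k) : Prop :=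
  p.dir j.castSucc = true ∧ p.dir j.succ = false

/-- The path is σ-blocked by `S`. -/
def sigmaBlocked (p : GPath G X Y) (S : Set V) : Prop :=
  ∃ j : Fin p.k,
    (p.isCollider j ∧ p.inner j ∉ G.anc S) ∨
    (¬ p.isCollider j ∧ p.inner j ∈ S ∧
      ((p.dir j.succ = true ∧ p.node j.succ.succ ∉ G.scc (p.inner j)) ∨
       (p.dir j.castSucc = false ∧ p.node j.castSucc.castSucc ∉ G.scc (p.inner j))))

/-- The path is d-blocked by `S`. -/
def dBlocked (p : GPath G X Y) (S : Set V) : Prop :=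
  ∃ j : Fin p.k,
    (p.isCollider j ∧ p.inner j ∉ G.anc S) ∨
    (¬ p.isCollider j ∧ p.inner j ∈ S)

end GPath

namespace DiGraph

variable {V : Type}

/-- `X` and `Y` are σ-separated given `S`: every path between them is σ-blocked. -/
def sigmaSep (G : DiGraph V) (X Y : V) (S : Set V) : Prop :=
  ∀ p : GPath G X Y, p.sigmaBlocked S

/-- `X` and `Y` are d-separated given `S`: every path between them is d-blocked. -/
def dSep (G : DiGraph V) (X Y : V) (S : Set V) : Prop :=
  ∀ p : GPath G X Y, p.dBlocked S

end DiGraph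

/-- `Ga` is a σ-acyclification of `G`. -/
def IsAcyclification {V : Type} (G Ga : DiGraph V) : Prop :=
  Ga.Acyclic ∧
  (∀ X Y : V, X ≠ Y → X ∉ G.scc Y → (Ga.Edge X Y ↔ ∃ W ∈ G.scc Y, G.Edge X W)) ∧
  (∀ X Y : V, X ≠ Y → X ∈ G.scc Y → Xor' (Ga.Edge X Y) (Ga.Edge Y X))

namespace DiGraph

variable {V : Type}

/-- `S` is the observed Markov blanket of `X` (w.r.t. σ-separation) given the
observed node set `Obs`: the minimal set `S ⊆ Obs \ {X}` such that `X` is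
σ-separated from every node of `Obs \ (S ∪ {X})` given `S`. -/
def IsSigmaMB (G : DiGraph V) (Obs : Set V) (X : V) (S : Set V) : Prop :=
  S ⊆ Obs \ {X} ∧
  (∀ W ∈ Obs \ (S ∪ {X}), G.sigmaSep X W S) ∧
  (∀ T ⊆ Obs \ {X}, (∀ W ∈ Obs \ (T ∪ {X}), G.sigmaSep X W T) → S ⊆ T)

/-- `S` is the observed Markov blanket of `X` (w.r.t. d-separation). -/
def IsDMB (G : DiGraph V) (Obs : Set V) (X : V) (S : Set V) : Prop :=
  S ⊆ Obs \ {X} ∧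
  (∀ W ∈ Obs \ (S ∪ {X}), G.dSep X W S) ∧
  (∀ T ⊆ Obs \ {X}, (∀ W ∈ Obs \ (T ∪ {X}), G.dSep X W T) → S ⊆ T)

/-- `Z` is a backdoor adjustment set for `(X, Y)`: `Z` avoids `X`, `Y` and the
descendants of `X`, and σ-blocks every backdoor path from `X` to `Y`
(a path whose first edge has an arrowhead into `X`). -/
def IsBackdoorAdjustment (G : DiGraph V) (X Y : V) (Z : Set V) : Prop :=
  X ∉ Z ∧ Y ∉ Z ∧ Z ∩ G.de X = ∅ ∧
  ∀ p : GPath G X Y, p.dir 0 = false → p.sigmaBlocked Z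

end DiGraph

/-- Pre-treatment assumption: the outcome `Y` has no descendants and the
treatment `X` has no children except possibly `Y`. -/
def PreTreatment {V : Type} (G : DiGraph V) (X Y : V) : Prop :=
  G.de Y = ∅ ∧ G.ch X ⊆ {Y}

/- ===================== Auxiliary development ===================== -/

section BackdoorAux

open Classical

variable {V : Type}

namespace DiGraph

variable {G : DiGraph V}

/-- adjacency with orientation -/
def Adjb (G : DiGraph V) (d : Bool) (a b : V) : Prop :=
  if d then G.Edge a b else G.Edge b a

lemma adjb_flip {d : Bool} {a b : V} (h : G.Adjb d a b) : G.Adjb (!d) b a := by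
  cases d <;> simpa [DiGraph.Adjb] using h

lemma reach_trans {a b c : V} (h1 : G.reach a b) (h2 : G.reach b c) : G.reach a c :=
  Relation.ReflTransGen.trans h1 h2

lemma reach_refl (a : V) : G.reach a a := Relation.ReflTransGen.refl

lemma mem_anc_of_mem {S : Set V} {a : V} (h : a ∈ S) : a ∈ G.anc S :=
  ⟨a, h, Relation.ReflTransGen.refl⟩

lemma anc_mono {S T : Set V} (h : S ⊆ T) : G.anc S ⊆ G.anc T := by
  rintro x ⟨s, hs, hr⟩; exact ⟨s, h hs, hr⟩

lemma mem_anc_trans {S : Set V} {a b : V} (h1 : G.reach a b) (h2 : b ∈ G.anc S) :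
    a ∈ G.anc S := by
  obtain ⟨s, hs, hr⟩ := h2; exact ⟨s, hs, reach_trans h1 hr⟩

lemma anc_anc {S T : Set V} (hT : T ⊆ G.anc S) : G.anc T ⊆ G.anc S := by
  rintro x ⟨t, ht, hr⟩; exact mem_anc_trans hr (hT ht)

lemma anc_union {S T : Set V} : G.anc (S ∪ T) = G.anc S ∪ G.anc T := by
  ext x
  constructor
  · rintro ⟨s, hs | hs, hr⟩
    · exact Or.inl ⟨s, hs, hr⟩
    · exact Or.inr ⟨s, hs, hr⟩
  · rintro (⟨s, hs, hr⟩ | ⟨s, hs, hr⟩)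
    · exact ⟨s, Or.inl hs, hr⟩
    · exact ⟨s, Or.inr hs, hr⟩

end DiGraph

/-- A triple of consecutive nodes on a walk, with the two orientations. -/
structure Trip (V : Type) where
  prev : V
  mid : V
  next : V
  d1 : Bool
  d2 : Bool

/-- The middle node is a collider. -/
def collT (t : Trip V) : Prop := t.d1 = true ∧ t.d2 = false

/-- The "escape" condition at a non-collider. -/
def escT (G : DiGraph V) (t : Trip V) : Prop :=
  (t.d2 = true ∧ t.next ∉ G.scc t.mid) ∨ (t.d1 = false ∧ t.prev ∉ G.scc t.mid)

/-- The walk is σ-blocked at this triple. -/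
def BAt (G : DiGraph V) (S : Set V) (t : Trip V) : Prop :=
  (collT t ∧ t.mid ∉ G.anc S) ∨ (¬ collT t ∧ t.mid ∈ S ∧ escT G t)

def flipT (t : Trip V) : Trip V := ⟨t.next, t.mid, t.prev, !t.d2, !t.d1⟩

lemma collT_flip (t : Trip V) : collT (flipT t) ↔ collT t := by
  simp [collT, flipT, Bool.not_eq_true', and_comm]

lemma escT_flip (G : DiGraph V) (t : Trip V) : escT G (flipT t) ↔ escT G t := by
  simp [escT, flipT, Bool.not_eq_true', Bool.not_eq_false', or_comm]

lemma BAt_flip (G : DiGraph V) (S : Set V) (t : Trip V) :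
    BAt G S (flipT t) ↔ BAt G S t := by
  have hm : (flipT t).mid = t.mid := rfl
  unfold BAt
  rw [collT_flip, escT_flip, hm]

/-- Oriented walks in a digraph. -/
inductive OW (G : DiGraph V) : V → V → Type where
  | nil (v : V) : OW G v v
  | cons {a b c : V} (d : Bool) (h : G.Adjb d a b) (w : OW G b c) : OW G a c

namespace OW

variable {G : DiGraph V}

def sup : {a b : V} → OW G a b → List V
  | _, _, .nil v => [v]
  | a, _, .cons _ _ w => a :: w.sup

def len : {a b : V} → OW G a b → ℕ
  | _, _, .nil _ => 0
  | _, _, .cons _ _ w => w.len + 1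

def headData : {a b : V} → OW G a b → Option (Bool × V)
  | _, _, .nil _ => none
  | _, _, .cons (b := m) d _ _ => some (d, m)

def firstD {a b : V} (w : OW G a b) : Option Bool := (w.headData).map Prod.fst

/-- `lastDataA p d w` : penultimate node and last direction of the pseudo-walk
`p -(d)-> (walk w)`. -/
def lastDataA : {b c : V} → V → Bool → OW G b c → (V × Bool)
  | _, _, p, d, .nil _ => (p, d)
  | b, _, _, _, .cons d₂ _ w₂ => lastDataA b d₂ w₂

def lastData : {a b : V} → OW G a b → Option (V × Bool)
  | _, _, .nil _ => none
  | a, _, .cons d _ w => some (lastDataA a d w)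

/-- triples of the pseudo-walk `p -(d)-> (walk w)`, excluding the triple centred at `p`. -/
def triplesA : {b c : V} → V → Bool → OW G b c → List (Trip V)
  | _, _, _, _, .nil _ => []
  | b, _, p, d, .cons (b := n) d₂ _ w₂ => ⟨p, b, n, d, d₂⟩ :: triplesA b d₂ w₂

def triples : {a b : V} → OW G a b → List (Trip V)
  | _, _, .nil _ => []
  | a, _, .cons d _ w => triplesA a d w

def append : {a b c : V} → OW G a b → OW G b c → OW G a c
  | _, _, _, .nil _, w₂ => w₂
  | _, _, _, .cons d h w, w₂ => .cons d h (append w w₂)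

def reverse : {a b : V} → OW G a b → OW G b a
  | _, _, .nil v => .nil v
  | _, _, .cons (a := a) d h w => append (reverse w) (.cons (!d) (DiGraph.adjb_flip h) (.nil a))

@[simp] lemma sup_nil (v : V) : (OW.nil (G := G) v).sup = [v] := rfl

@[simp] lemma sup_cons {a m c : V} (d : Bool) (h : G.Adjb d a m) (w : OW G m c) :
    (OW.cons d h w).sup = a :: w.sup := rfl

@[simp] lemma append_cons {a m c e : V} (d : Bool) (h : G.Adjb d a m) (w : OW G m c)
    (w₂ : OW G c e) : (OW.cons d h w).append w₂ = OW.cons d h (w.append w₂) := rfl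

@[simp] lemma append_nil_left {a c : V} (w₂ : OW G a c) : (OW.nil a).append w₂ = w₂ := rfl

lemma sup_ne_nil {a b : V} (w : OW G a b) : w.sup ≠ [] := by
  cases w <;> simp

lemma head_sup {a b : V} (w : OW G a b) : w.sup.head (sup_ne_nil w) = a := by
  cases w <;> rfl

lemma mem_sup_self {a b : V} (w : OW G a b) : a ∈ w.sup := by
  cases w <;> simp

lemma mem_sup_last {a b : V} (w : OW G a b) : b ∈ w.sup := by
  induction w with
  | nil v => simp
  | cons d h w ih => simp [ih]

lemma sup_length {a b : V} (w : OW G a b) : w.sup.length = w.len + 1 := by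
  induction w with
  | nil v => rfl
  | cons d h w ih => simp [len, ih]

lemma getLast_sup {a b : V} (w : OW G a b) : w.sup.getLast (sup_ne_nil w) = b := by
  induction w with
  | nil v => rfl
  | cons d h w ih =>
      simp only [sup_cons]
      rw [List.getLast_cons (sup_ne_nil w)]
      exact ih

lemma eq_of_len_zero {a b : V} (w : OW G a b) (h : w.len = 0) : a = b := by
  cases w with
  | nil v => rfl
  | cons d hd w => simp [len] at h

lemma len_pos_of_ne {a b : V} (w : OW G a b) (h : a ≠ b) : 0 < w.len := by
  rcases Nat.eq_zero_or_pos w.len with h0 | h0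
  · exact absurd (eq_of_len_zero w h0) h
  · exact h0

@[simp] lemma append_nil' {a b : V} (w : OW G a b) : (w.append (OW.nil b)) = w := by
  induction w with
  | nil v => rfl
  | cons d h w ih => rw [append_cons, ih]

lemma len_append {a b c : V} (w₁ : OW G a b) (w₂ : OW G b c) :
    (w₁.append w₂).len = w₁.len + w₂.len := by
  induction w₁ with
  | nil v => simp [len]
  | cons d h w ih => rw [append_cons]; simp [len, ih]; omega

lemma sup_append {a b c : V} (w₁ : OW G a b) (w₂ : OW G b c) :
    (w₁.append w₂).sup = w₁.sup ++ w₂.sup.tail := by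
  induction w₁ with
  | nil v => cases w₂ <;> simp
  | cons d h w ih => rw [append_cons]; simp [ih]

lemma headData_cons {a m c : V} (d : Bool) (h : G.Adjb d a m) (w : OW G m c) :
    (OW.cons d h w).headData = some (d, m) := rfl

lemma headData_append₁ {a b c : V} (w₁ : OW G a b) (w₂ : OW G b c) (h : 0 < w₁.len) :
    (w₁.append w₂).headData = w₁.headData := by
  cases w₁ with
  | nil v => simp [len] at h
  | cons d hd w => rfl

lemma firstD_cons {a m c : V} (d : Bool) (h : G.Adjb d a m) (w : OW G m c) :
    (OW.cons d h w).firstD = some d := rfl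

@[simp] lemma lastDataA_nil (p : V) (d : Bool) (b : V) :
    lastDataA (G := G) p d (OW.nil b) = (p, d) := rfl

@[simp] lemma lastDataA_cons {b n c : V} (p : V) (d d₂ : Bool) (h : G.Adjb d₂ b n)
    (w₂ : OW G n c) : lastDataA p d (OW.cons d₂ h w₂) = lastDataA b d₂ w₂ := rfl

@[simp] lemma lastData_cons {a m c : V} (d : Bool) (h : G.Adjb d a m) (w : OW G m c) :
    (OW.cons d h w).lastData = some (lastDataA a d w) := rfl

lemma lastDataA_append {b c n e : V} (w : OW G b c) (d' : Bool) (h' : G.Adjb d' c n)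
    (w' : OW G n e) :
    ∀ (p : V) (d : Bool), lastDataA p d (w.append (OW.cons d' h' w')) = lastDataA c d' w' := by
  induction w with
  | nil v => intro p d; rfl
  | cons d₂ h₂ w₂ ih => intro p d; rw [append_cons, lastDataA_cons]; apply ih

lemma lastData_append {a b c : V} (w₁ : OW G a b) (w₂ : OW G b c) (h : 0 < w₂.len) :
    (w₁.append w₂).lastData = w₂.lastData := by
  cases w₂ with
  | nil v => simp [len] at h
  | cons d' h' w' =>
      cases w₁ with
      | nil v => rfl
      | cons d hd w =>
          rw [append_cons, lastData_cons, lastData_cons, lastDataA_append]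

@[simp] lemma triplesA_nil (p : V) (d : Bool) (b : V) :
    triplesA (G := G) p d (OW.nil b) = [] := rfl

@[simp] lemma triplesA_cons {b n c : V} (p : V) (d d₂ : Bool) (h : G.Adjb d₂ b n)
    (w₂ : OW G n c) :
    triplesA p d (OW.cons d₂ h w₂) = ⟨p, b, n, d, d₂⟩ :: triplesA b d₂ w₂ := rfl

@[simp] lemma triples_nil (v : V) : (OW.nil (G := G) v).triples = [] := rfl

@[simp] lemma triples_cons {a m c : V} (d : Bool) (h : G.Adjb d a m) (w : OW G m c) :
    (OW.cons d h w).triples = triplesA a d w := rfl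

/-- the junction triple of an append -/
def junc (b : V) (o₁ : Option (V × Bool)) (o₂ : Option (Bool × V)) : List (Trip V) :=
  match o₁, o₂ with
  | some (p, d₁), some (d₂, n) => [⟨p, b, n, d₁, d₂⟩]
  | _, _ => []

lemma triplesA_append {b c e : V} (w : OW G b c) (w₂ : OW G c e) :
    ∀ (p : V) (d : Bool),
      triplesA p d (w.append w₂) =
        triplesA p d w ++ junc c (some (lastDataA p d w)) w₂.headData ++ w₂.triples := by
  induction w with
  | nil v =>
      intro p d
      cases w₂ with
      | nil v' => rfl
      | cons d₂ h₂ w₂' => simp [junc, headData]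
  | cons d₂ h₂ w' ih =>
      intro p d
      rw [append_cons, triplesA_cons, ih, triplesA_cons]
      simp

lemma triples_append {a b c : V} (w₁ : OW G a b) (w₂ : OW G b c) :
    (w₁.append w₂).triples = w₁.triples ++ junc b w₁.lastData w₂.headData ++ w₂.triples := by
  cases w₁ with
  | nil v => simp [junc, lastData]
  | cons d h w =>
      rw [append_cons, triples_cons, triples_cons, triplesA_append, lastData_cons]

lemma len_reverse {a b : V} (w : OW G a b) : w.reverse.len = w.len := by
  induction w with
  | nil v => rfl
  | cons d h w ih =>
      show ((w.reverse).append _).len = _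
      rw [len_append, ih]; simp [len]

lemma sup_reverse {a b : V} (w : OW G a b) : w.reverse.sup = w.sup.reverse := by
  induction w with
  | nil v => rfl
  | cons d h w ih =>
      show ((w.reverse).append _).sup = _
      rw [sup_append, ih]; simp

lemma headData_reverse {a b : V} (w : OW G a b) :
    w.reverse.headData = w.lastData.map (fun pd => (!pd.2, pd.1)) := by
  induction w with
  | nil v => rfl
  | cons d h w ih =>
      show ((w.reverse).append _).headData = _
      cases w with
      | nil v => rfl
      | cons d₂ h₂ w₂ =>
          rw [headData_append₁ _ _ (by rw [len_reverse]; simp [len]), ih,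
            lastData_cons, lastData_cons, lastDataA_cons]

lemma lastData_reverse {a b : V} (w : OW G a b) :
    w.reverse.lastData = w.headData.map (fun dn => (dn.2, !dn.1)) := by
  cases w with
  | nil v => rfl
  | cons d h w =>
      show ((w.reverse).append _).lastData = _
      rw [lastData_append _ _ (by simp [len]), lastData_cons, headData_cons]
      rfl

lemma triples_reverse {a b : V} (w : OW G a b) :
    w.reverse.triples = (w.triples.map flipT).reverse := by
  induction w with
  | nil v => rfl
  | cons d h w ih =>
      show ((w.reverse).append _).triples = _
      rw [triples_append, ih, lastData_reverse]
      cases w with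
      | nil v => rfl
      | cons d₂ h₂ w₂ =>
          simp [junc, flipT, headData]

end OW

namespace OW

variable {G : DiGraph V}

def dirs : {a b : V} → OW G a b → List Bool
  | _, _, .nil _ => []
  | _, _, .cons d _ w => d :: dirs w

@[simp] lemma dirs_nil (v : V) : (OW.nil (G := G) v).dirs = [] := rfl

@[simp] lemma dirs_cons {a m c : V} (d : Bool) (h : G.Adjb d a m) (w : OW G m c) :
    (OW.cons d h w).dirs = d :: w.dirs := rfl

lemma dirs_length {a b : V} (w : OW G a b) : w.dirs.length = w.len := by
  induction w with
  | nil v => rfl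
  | cons d h w ih => simp [len, ih]

lemma lastData_eq_lastDataA {x y : V} (v : OW G x y) (hv : 0 < v.len) (p : V) (d : Bool) :
    v.lastData = some (lastDataA p d v) := by
  cases v with
  | nil _ => simp [len] at hv
  | cons d' h' w' => rfl

lemma lastDataA_of_len_zero {x y : V} (v : OW G x y) (hv : v.len = 0) (p : V) (d : Bool) :
    lastDataA p d v = (p, d) := by
  cases v with
  | nil _ => rfl
  | cons d' h' w' => simp [len] at hv

lemma triples_cons_eq {a m c : V} (d : Bool) (hd : G.Adjb d a m) (w' : OW G m c) :
    (OW.cons d hd w').triples = junc m (some (a, d)) w'.headData ++ w'.triples := by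
  cases w' <;> simp [junc, headData]

lemma triples_eq_nil_of_len_zero {a b : V} (w : OW G a b) (h : w.len = 0) :
    w.triples = [] := by
  cases w with
  | nil v => rfl
  | cons d hd w' => simp [len] at h

lemma len_pos_of_headData {a b : V} {w : OW G a b} {d : Bool} {n : V}
    (h : w.headData = some (d, n)) : 0 < w.len := by
  cases w with
  | nil v => simp [headData] at h
  | cons d' h' w' => simp [len]

lemma ends_ne {x y : V} (w : OW G x y) (hl : 0 < w.len) (hN : w.sup.Nodup) : x ≠ y := by
  cases w with
  | nil v => simp [len] at hl
  | cons d hd w' =>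
      intro e
      simp only [sup_cons, List.nodup_cons] at hN
      exact hN.1 (e ▸ mem_sup_last w')

lemma triplesA_sub {a m c : V} (d : Bool) (hd : G.Adjb d a m) (w' : OW G m c) (t : Trip V)
    (ht : t ∈ w'.triples) : t ∈ (OW.cons d hd w').triples := by
  rw [triples_cons_eq]
  exact List.mem_append_right _ ht

noncomputable def dropUntil : {a b : V} → (w : OW G a b) → (u : V) → u ∈ w.sup → OW G u b
  | _, _, .nil v, u, h => by
      have h' : u = v := List.mem_singleton.mp h
      subst h'
      exact OW.nil u
  | a, _, .cons d hd w', u, h =>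
      if hu : a = u then by subst hu; exact OW.cons d hd w'
      else dropUntil w' u (by
        rcases List.mem_cons.mp h with h' | h'
        · exact absurd h'.symm hu
        · exact h')

noncomputable def takeUntil : {a b : V} → (w : OW G a b) → (u : V) → u ∈ w.sup → OW G a u
  | _, _, .nil v, u, h => by
      have h' : u = v := List.mem_singleton.mp h
      subst h'
      exact OW.nil u
  | a, _, .cons d hd w', u, h =>
      if hu : a = u then by subst hu; exact OW.nil a
      else OW.cons d hd (takeUntil w' u (by
        rcases List.mem_cons.mp h with h' | h'
        · exact absurd h'.symm hu
        · exact h'))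

lemma dropUntil_self {a b : V} (w : OW G a b) (h : a ∈ w.sup) : dropUntil w a h = w := by
  cases w with
  | nil v => rfl
  | cons d hd w' => simp [dropUntil]

lemma dropUntil_cons_ne {a m c : V} (d : Bool) (hd : G.Adjb d a m) (w' : OW G m c)
    {u : V} (h : u ∈ (OW.cons d hd w').sup) (hu : ¬ a = u) :
    dropUntil (OW.cons d hd w') u h = dropUntil w' u (by
      rcases List.mem_cons.mp h with h' | h'
      · exact absurd h'.symm hu
      · exact h') := by
  simp only [dropUntil, dif_neg hu]

lemma takeUntil_cons_ne {a m c : V} (d : Bool) (hd : G.Adjb d a m) (w' : OW G m c)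
    {u : V} (h : u ∈ (OW.cons d hd w').sup) (hu : ¬ a = u) :
    takeUntil (OW.cons d hd w') u h = OW.cons d hd (takeUntil w' u (by
      rcases List.mem_cons.mp h with h' | h'
      · exact absurd h'.symm hu
      · exact h')) := by
  simp only [takeUntil, dif_neg hu]

lemma takeUntil_self_len {a b : V} (w : OW G a b) (h : a ∈ w.sup) :
    (takeUntil w a h).len = 0 := by
  cases w with
  | nil v => rfl
  | cons d hd w' => simp [takeUntil, len]

lemma headData_takeUntil : ∀ {a b : V} (w : OW G a b) (u : V) (h : u ∈ w.sup),
    u ≠ a → (takeUntil w u h).headData = w.headData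
  | _, _, .nil v, u, h => by
      have h' : u = v := List.mem_singleton.mp h
      subst h'
      exact fun hne => absurd rfl hne
  | a, _, .cons d hd w', u, h => by
      intro hne
      rw [takeUntil_cons_ne d hd w' h (Ne.symm hne)]
      rfl

lemma len_takeUntil_pos : ∀ {a b : V} (w : OW G a b) (u : V) (h : u ∈ w.sup),
    u ≠ a → 0 < (takeUntil w u h).len
  | _, _, .nil v, u, h => by
      have h' : u = v := List.mem_singleton.mp h
      subst h'
      exact fun hne => absurd rfl hne
  | a, _, .cons d hd w', u, h => by
      intro hne
      rw [takeUntil_cons_ne d hd w' h (Ne.symm hne)]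
      simp [len]

lemma sup_dropUntil_suffix : ∀ {a b : V} (w : OW G a b) (u : V) (h : u ∈ w.sup),
    (dropUntil w u h).sup <:+ w.sup
  | _, _, .nil v, u, h => by
      have h' : u = v := List.mem_singleton.mp h
      subst h'
      exact List.suffix_refl _
  | a, _, .cons d hd w', u, h => by
      by_cases hu : a = u
      · subst hu
        rw [dropUntil_self]
      · rw [dropUntil_cons_ne d hd w' h hu]
        exact (sup_dropUntil_suffix w' u _).trans (List.suffix_cons a _)

lemma sup_takeUntil_prefix : ∀ {a b : V} (w : OW G a b) (u : V) (h : u ∈ w.sup),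
    (takeUntil w u h).sup <+: w.sup
  | _, _, .nil v, u, h => by
      have h' : u = v := List.mem_singleton.mp h
      subst h'
      exact List.prefix_refl _
  | a, _, .cons d hd w', u, h => by
      by_cases hu : a = u
      · subst hu
        refine ⟨w'.sup, ?_⟩
        have : takeUntil (OW.cons d hd w') a h = OW.nil a := by simp [takeUntil]
        rw [this]
        rfl
      · rw [takeUntil_cons_ne d hd w' h hu]
        obtain ⟨r, hr⟩ := sup_takeUntil_prefix w' u (by
          rcases List.mem_cons.mp h with h' | h'
          · exact absurd h'.symm hu
          · exact h')
        exact ⟨r, by simp only [sup_cons, List.cons_append, hr]⟩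

lemma sup_split : ∀ {a b : V} (w : OW G a b) (u : V) (h : u ∈ w.sup),
    w.sup = (takeUntil w u h).sup.dropLast ++ (dropUntil w u h).sup
  | _, _, .nil v, u, h => by
      have h' : u = v := List.mem_singleton.mp h
      subst h'
      rfl
  | a, _, .cons d hd w', u, h => by
      by_cases hu : a = u
      · subst hu
        rw [dropUntil_self]
        have : takeUntil (OW.cons d hd w') a h = OW.nil a := by simp [takeUntil]
        rw [this]
        rfl
      · rw [takeUntil_cons_ne d hd w' h hu, dropUntil_cons_ne d hd w' h hu]
        simp only [sup_cons]
        rw [List.dropLast_cons_of_ne_nil (sup_ne_nil _), List.cons_append]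
        exact congrArg (a :: ·) (sup_split w' u _)

lemma triples_dropUntil_sub : ∀ {a b : V} (w : OW G a b) (u : V) (h : u ∈ w.sup)
    (t : Trip V), t ∈ (dropUntil w u h).triples → t ∈ w.triples
  | _, _, .nil v, u, h => by
      have h' : u = v := List.mem_singleton.mp h
      subst h'
      exact fun t ht => ht
  | a, _, .cons d hd w', u, h => by
      intro t ht
      by_cases hu : a = u
      · subst hu
        rw [dropUntil_self] at ht
        exact ht
      · rw [dropUntil_cons_ne d hd w' h hu] at ht
        exact triplesA_sub d hd w' t (triples_dropUntil_sub w' u _ t ht)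

lemma triples_takeUntil_sub : ∀ {a b : V} (w : OW G a b) (u : V) (h : u ∈ w.sup)
    (t : Trip V), t ∈ (takeUntil w u h).triples → t ∈ w.triples
  | _, _, .nil v, u, h => by
      have h' : u = v := List.mem_singleton.mp h
      subst h'
      exact fun t ht => ht
  | a, _, .cons (b := m) d hd w', u, h => by
      intro t ht
      by_cases hu : a = u
      · subst hu
        have h0 : (takeUntil (OW.cons d hd w') a h).len = 0 := takeUntil_self_len _ _
        rw [triples_eq_nil_of_len_zero _ h0] at ht
        simp at ht
      · have hmem : u ∈ w'.sup := by
          rcases List.mem_cons.mp h with h' | h'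
          · exact absurd h'.symm hu
          · exact h'
        rw [takeUntil_cons_ne d hd w' h hu] at ht
        by_cases hm : u = m
        · subst hm
          rw [triples_cons_eq] at ht
          have h0 : (takeUntil w' u hmem).len = 0 := takeUntil_self_len w' hmem
          rw [triples_eq_nil_of_len_zero _ h0] at ht
          have hhd : (takeUntil w' u hmem).headData = none := by
            cases hW : takeUntil w' u hmem with
            | nil v => rfl
            | cons d₂ h₂ w₂ => rw [hW] at h0; simp [len] at h0
          rw [hhd] at ht
          simp [junc] at ht
        · rw [triples_cons_eq, headData_takeUntil w' u hmem hm] at ht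
          rw [triples_cons_eq]
          rcases List.mem_append.mp ht with hj | ht'
          · exact List.mem_append_left _ hj
          · exact List.mem_append_right _ (triples_takeUntil_sub w' u hmem t ht')

lemma len_dropUntil_le {a b : V} (w : OW G a b) (u : V) (h : u ∈ w.sup) :
    (dropUntil w u h).len ≤ w.len := by
  have := (sup_dropUntil_suffix w u h).length_le
  rw [sup_length, sup_length] at this
  omega

lemma len_dropUntil_lt : ∀ {a b : V} (w : OW G a b) (u : V) (h : u ∈ w.sup),
    u ≠ a → (dropUntil w u h).len < w.len
  | _, _, .nil v, u, h => by
      have h' : u = v := List.mem_singleton.mp h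
      subst h'
      exact fun hne => absurd rfl hne
  | a, _, .cons d hd w', u, h => by
      intro hne
      rw [dropUntil_cons_ne d hd w' h (Ne.symm hne)]
      have := len_dropUntil_le w' u (by
        rcases List.mem_cons.mp h with h' | h'
        · exact absurd h'.symm (Ne.symm hne)
        · exact h')
      simp only [len]
      omega

lemma decomp : ∀ {a c : V} (w : OW G a c) (_ : w.sup.Nodup) (t : Trip V)
    (_ : t ∈ w.triples),
    ∃ (h : t.mid ∈ w.sup), t.mid ≠ a ∧ t.mid ≠ c ∧
      (dropUntil w t.mid h).headData = some (t.d2, t.next) ∧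
      (takeUntil w t.mid h).lastData = some (t.prev, t.d1)
  | _, _, .nil v, hN, t, ht => by simp [triples] at ht
  | a, c, .cons (b := m) d hd w', hN, t, ht => by
      rw [triples_cons_eq] at ht
      have hanotin : a ∉ w'.sup := by
        simp only [sup_cons, List.nodup_cons] at hN
        exact hN.1
      have hNw' : w'.sup.Nodup := by
        simp only [sup_cons, List.nodup_cons] at hN
        exact hN.2
      rcases List.mem_append.mp ht with hj | ht'
      · -- junction (head) triple
        rcases hHD : w'.headData with _ | ⟨d₂, n⟩
        · rw [hHD] at hj; simp [junc] at hj
        · rw [hHD] at hj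
          simp only [junc, List.mem_singleton] at hj
          subst hj
          have hma : m ≠ a := fun e => hanotin (e ▸ mem_sup_self _)
          have hmc : m ≠ c := ends_ne w' (len_pos_of_headData hHD) hNw'
          have hmem : m ∈ (OW.cons d hd w' : OW G a c).sup := by
            simp only [sup_cons]
            exact List.mem_cons_of_mem _ (mem_sup_self _)
          refine ⟨hmem, hma, hmc, ?_, ?_⟩
          · show ((OW.cons d hd w').dropUntil m hmem).headData = _
            rw [dropUntil_cons_ne d hd w' hmem (Ne.symm hma), dropUntil_self]
            exact hHD
          · show ((OW.cons d hd w').takeUntil m hmem).lastData = _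
            rw [takeUntil_cons_ne d hd w' hmem (Ne.symm hma), lastData_cons,
              lastDataA_of_len_zero _ (takeUntil_self_len w' _)]
      · -- recursive case
        obtain ⟨h', hne_m, hne_c, hdrop, htake⟩ := decomp w' hNw' t ht'
        have hta : t.mid ≠ a := fun e => hanotin (e ▸ h')
        have hmem : t.mid ∈ (OW.cons d hd w' : OW G a c).sup := by
          simp only [sup_cons]
          exact List.mem_cons_of_mem _ h'
        refine ⟨hmem, hta, hne_c, ?_, ?_⟩
        · show ((OW.cons d hd w').dropUntil t.mid hmem).headData = _
          rw [dropUntil_cons_ne d hd w' hmem (Ne.symm hta)]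
          exact hdrop
        · show ((OW.cons d hd w').takeUntil t.mid hmem).lastData = _
          rw [takeUntil_cons_ne d hd w' hmem (Ne.symm hta), lastData_cons]
          have hpos : 0 < (w'.takeUntil t.mid h').len :=
            len_takeUntil_pos _ _ _ hne_m
          rw [lastData_eq_lastDataA _ hpos a d] at htake
          rw [← htake]

end OW


namespace OW

variable {G : DiGraph V}

lemma sup_getElem_zero {a b : V} (w : OW G a b) (h : 0 < w.sup.length) : w.sup[0] = a := by
  cases w <;> rfl

lemma headData_none_of_len_zero {m c : V} (w' : OW G m c) (h : w'.len = 0) :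
    w'.headData = none := by
  cases w' with
  | nil v => rfl
  | cons d hd w₂ => simp [len] at h

lemma headData_eq {m c : V} (w' : OW G m c) (hl : 0 < w'.len) :
    w'.headData = some (w'.dirs[0]'(by rw [dirs_length]; omega),
      w'.sup[1]'(by rw [sup_length]; omega)) := by
  cases w' with
  | nil v => simp [len] at hl
  | cons d₂ h₂ w₂ =>
      simp only [headData, dirs_cons, sup_cons, List.getElem_cons_zero,
        List.getElem_cons_succ]
      rw [sup_getElem_zero w₂ (by rw [sup_length]; omega)]

lemma mem_triples_iff : ∀ {a c : V} (w : OW G a c) (t : Trip V),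
    t ∈ w.triples ↔ ∃ (j : ℕ) (hj : j + 1 < w.len),
      t.prev = w.sup[j]'(by rw [sup_length]; omega) ∧
      t.mid = w.sup[j+1]'(by rw [sup_length]; omega) ∧
      t.next = w.sup[j+2]'(by rw [sup_length]; omega) ∧
      t.d1 = w.dirs[j]'(by rw [dirs_length]; omega) ∧
      t.d2 = w.dirs[j+1]'(by rw [dirs_length]; omega)
  | _, _, .nil v, t => by simp [triples, len]
  | a, c, .cons (b := m) d hd w', t => by
      rw [triples_cons_eq]
      rcases Nat.eq_zero_or_pos w'.len with h0 | hl
      · rw [headData_none_of_len_zero w' h0, triples_eq_nil_of_len_zero w' h0]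
        simp only [junc, List.append_nil, List.not_mem_nil, false_iff]
        push_neg
        intro j hj
        exfalso
        simp only [len] at hj
        omega
      · constructor
        · intro ht
          rcases List.mem_append.mp ht with hj | ht'
          · rw [headData_eq w' hl] at hj
            simp only [junc, List.mem_singleton] at hj
            subst hj
            refine ⟨0, by simp only [len]; omega, ?_, ?_, ?_, ?_, ?_⟩
            · rfl
            · show m = (a :: w'.sup)[1]'_
              exact (sup_getElem_zero w' (by rw [sup_length]; omega)).symm
            · rfl
            · rfl
            · rfl
          · obtain ⟨j, hj, h1, h2, h3, h4, h5⟩ := (mem_triples_iff w' t).mp ht'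
            refine ⟨j+1, by simp only [len]; omega, ?_, ?_, ?_, ?_, ?_⟩ <;>
              simp only [sup_cons, dirs_cons, List.getElem_cons_succ]
            exacts [h1, h2, h3, h4, h5]
        · rintro ⟨j, hj, h1, h2, h3, h4, h5⟩
          cases j with
          | succ j' =>
              refine List.mem_append_right _ ((mem_triples_iff w' t).mpr
                ⟨j', by simp only [len] at hj; omega, ?_, ?_, ?_, ?_, ?_⟩) <;>
                simp only [sup_cons, dirs_cons, List.getElem_cons_succ] at h1 h2 h3 h4 h5
              exacts [h1, h2, h3, h4, h5]
          | zero =>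
              apply List.mem_append_left
              rw [headData_eq w' hl]
              simp only [junc, List.mem_singleton]
              simp only [sup_cons, dirs_cons, List.getElem_cons_succ,
                List.getElem_cons_zero] at h1 h2 h3 h4 h5
              rcases t with ⟨tp, tm, tn, td1, td2⟩
              simp only at h1 h2 h3 h4 h5 ⊢
              rw [h1, h2, h3, h4, h5, sup_getElem_zero w' (by rw [sup_length]; omega)]

lemma adjb_getElem {a b : V} (w : OW G a b) :
    ∀ (j : ℕ) (hj : j < w.len),
      G.Adjb (w.dirs[j]'(by rw [dirs_length]; omega))
        (w.sup[j]'(by rw [sup_length]; omega))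
        (w.sup[j+1]'(by rw [sup_length]; omega)) := by
  induction w with
  | nil v => intro j hj; simp [len] at hj
  | cons d hd w' ih =>
      intro j hj
      cases j with
      | zero =>
          simp only [sup_cons, dirs_cons, List.getElem_cons_zero, List.getElem_cons_succ]
          rw [sup_getElem_zero w' (by rw [sup_length]; omega)]
          exact hd
      | succ j' =>
          simp only [sup_cons, dirs_cons, List.getElem_cons_succ]
          exact ih j' (by simp only [len] at hj; omega)

lemma firstD_eq_dirs_zero {a b : V} (w : OW G a b) (h : 0 < w.len) :
    w.firstD = some (w.dirs[0]'(by rw [dirs_length]; omega)) := by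
  cases w with
  | nil v => simp [len] at h
  | cons d hd w' => rfl

end OW

section Conversions

variable {G : DiGraph V}

open OW

/-- Convert an oriented walk with no duplicate nodes into a `GPath`. -/
noncomputable def OW.toGPath {a b : V} (w : OW G a b) (hN : w.sup.Nodup) (hl : 0 < w.len) :
    GPath G a b where
  k := w.len - 1
  node i := w.sup[i.val]'(by rw [sup_length]; omega)
  dir i := w.dirs[i.val]'(by rw [dirs_length]; omega)
  inj := by
    intro i j hij
    have hinj := List.nodup_iff_injective_get.mp hN
    have h2 : w.sup.get ⟨i.val, by rw [sup_length]; omega⟩ =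
        w.sup.get ⟨j.val, by rw [sup_length]; omega⟩ := by
      simpa [List.get_eq_getElem] using hij
    have h3 := hinj h2
    have hv : i.val = j.val := by simpa using h3
    exact Fin.ext hv
  first := sup_getElem_zero w (by rw [sup_length]; omega)
  last := by
    have hgl := getLast_sup w
    rw [List.getLast_eq_getElem] at hgl
    show w.sup[(w.len - 1 + 1 : ℕ)]'(by rw [sup_length]; omega) = b
    have h2 : w.sup[(w.len - 1 + 1 : ℕ)]'(by rw [sup_length]; omega) =
        w.sup[w.sup.length - 1]'(by rw [sup_length]; omega) := by
      congr 1
      rw [sup_length]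
      omega
    exact h2.trans hgl
  adj i := by
    have h := adjb_getElem w i.val (by omega)
    constructor
    · intro hd
      replace hd : w.dirs[i.val]'(by rw [dirs_length]; omega) = true := hd
      rw [hd] at h
      simpa [DiGraph.Adjb] using h
    · intro hd
      replace hd : w.dirs[i.val]'(by rw [dirs_length]; omega) = false := hd
      rw [hd] at h
      simpa [DiGraph.Adjb] using h

lemma OW.toGPath_dir_zero {a b : V} (w : OW G a b) (hN : w.sup.Nodup) (hl : 0 < w.len)
    {d : Bool} (hf : w.firstD = some d) : (w.toGPath hN hl).dir 0 = d := by
  rw [firstD_eq_dirs_zero w hl] at hf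
  have hd := Option.some.inj hf
  show w.dirs[((0 : Fin (w.len - 1 + 1)) : ℕ)]'(by rw [dirs_length]; omega) = d
  simp only [Fin.val_zero]
  exact hd

lemma OW.toGPath_blocked_iff {a b : V} (w : OW G a b) (hN : w.sup.Nodup) (hl : 0 < w.len)
    (S : Set V) :
    (w.toGPath hN hl).sigmaBlocked S ↔ ∃ t ∈ w.triples, BAt G S t := by
  unfold GPath.sigmaBlocked
  constructor
  · rintro ⟨j, hcase⟩
    refine ⟨⟨(w.toGPath hN hl).node j.castSucc.castSucc,
            (w.toGPath hN hl).node j.succ.castSucc,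
            (w.toGPath hN hl).node j.succ.succ,
            (w.toGPath hN hl).dir j.castSucc,
            (w.toGPath hN hl).dir j.succ⟩, ?_, ?_⟩
    · rw [mem_triples_iff]
      have hjk := j.isLt
      have hk2 : (w.toGPath hN hl).k + 1 = w.len := by
        show w.len - 1 + 1 = w.len
        omega
      exact ⟨j.val, by omega, rfl, rfl, rfl, rfl, rfl⟩
    · exact hcase
  · rintro ⟨t, htmem, hBA⟩
    rw [mem_triples_iff] at htmem
    obtain ⟨j, hj, h1, h2, h3, h4, h5⟩ := htmem
    refine ⟨⟨j, show j < w.len - 1 by omega⟩, ?_⟩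
    rcases t with ⟨tp, tm, tn, td1, td2⟩
    simp only at h1 h2 h3 h4 h5
    subst h1 h2 h3 h4 h5
    exact hBA

/-- Build an oriented walk from indexed node/direction data. -/
noncomputable def OW.build : (n : ℕ) → (f : ℕ → V) → (ds : ℕ → Bool) →
    (∀ j, j < n → G.Adjb (ds j) (f j) (f (j+1))) → OW G (f 0) (f n)
  | 0, f, _, _ => OW.nil (f 0)
  | n+1, f, ds, adj =>
      OW.cons (ds 0) (adj 0 (by omega))
        (OW.build n (fun j => f (j+1)) (fun j => ds (j+1)) (fun j hj => adj (j+1) (by omega)))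

lemma OW.len_build {n : ℕ} {f : ℕ → V} {ds : ℕ → Bool} {adj} :
    (OW.build (G := G) n f ds adj).len = n := by
  induction n generalizing f ds with
  | zero => rfl
  | succ n ih => simp only [OW.build, len, ih]

lemma OW.sup_build_getElem : ∀ (n : ℕ) (f : ℕ → V) (ds : ℕ → Bool) adj (j : ℕ)
    (hj : j < (OW.build (G := G) n f ds adj).sup.length),
    (OW.build (G := G) n f ds adj).sup[j] = f j
  | 0, f, ds, adj, j, hj => by
      simp only [OW.build, sup_nil, List.length_singleton] at hj
      have : j = 0 := by omega
      subst this
      rfl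
  | n+1, f, ds, adj, j, hj => by
      simp only [OW.build, sup_cons] at hj ⊢
      cases j with
      | zero => rfl
      | succ j' =>
          rw [List.getElem_cons_succ]
          exact OW.sup_build_getElem n _ _ _ j' (by simpa using hj)

lemma OW.dirs_build_getElem : ∀ (n : ℕ) (f : ℕ → V) (ds : ℕ → Bool) adj (j : ℕ)
    (hj : j < (OW.build (G := G) n f ds adj).dirs.length),
    (OW.build (G := G) n f ds adj).dirs[j] = ds j
  | 0, f, ds, adj, j, hj => by
      simp [OW.build] at hj
  | n+1, f, ds, adj, j, hj => by
      simp only [OW.build, dirs_cons] at hj ⊢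
      cases j with
      | zero => rfl
      | succ j' =>
          rw [List.getElem_cons_succ]
          exact OW.dirs_build_getElem n _ _ _ j' (by simpa using hj)

lemma OW.firstD_build {n : ℕ} {f : ℕ → V} {ds : ℕ → Bool} {adj} (hn : 0 < n) :
    (OW.build (G := G) n f ds adj).firstD = some (ds 0) := by
  cases n with
  | zero => omega
  | succ n => rfl

end Conversions


section ListHelpers

variable {α : Type}

lemma first_split (P : α → Prop) [DecidablePred P] :
    ∀ (l : List α), (∃ x ∈ l, P x) →
    ∃ l₁ x l₂, l = l₁ ++ x :: l₂ ∧ P x ∧ ∀ y ∈ l₁, ¬ P y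
  | [], h => by simp at h
  | a :: tl, h => by
      by_cases ha : P a
      · exact ⟨[], a, tl, rfl, ha, by simp⟩
      · have htl : ∃ x ∈ tl, P x := by
          obtain ⟨x, hx, hPx⟩ := h
          rcases List.mem_cons.mp hx with rfl | hx'
          · exact absurd hPx ha
          · exact ⟨x, hx', hPx⟩
        obtain ⟨l₁, x, l₂, rfl, hPx, hl₁⟩ := first_split P tl htl
        refine ⟨a :: l₁, x, l₂, rfl, hPx, ?_⟩
        intro y hy
        rcases List.mem_cons.mp hy with rfl | hy'
        · exact ha
        · exact hl₁ y hy'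

lemma last_split (P : α → Prop) [DecidablePred P] :
    ∀ (l : List α), (∃ x ∈ l, P x) →
    ∃ l₁ x l₂, l = l₁ ++ x :: l₂ ∧ P x ∧ ∀ y ∈ l₂, ¬ P y
  | [], h => by simp at h
  | a :: tl, h => by
      by_cases htl : ∃ x ∈ tl, P x
      · obtain ⟨l₁, x, l₂, rfl, hPx, hl₂⟩ := last_split P tl htl
        exact ⟨a :: l₁, x, l₂, rfl, hPx, hl₂⟩
      · push_neg at htl
        have ha : P a := by
          obtain ⟨x, hx, hPx⟩ := h
          rcases List.mem_cons.mp hx with rfl | hx'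
          · exact hPx
          · exact absurd hPx (htl x hx')
        exact ⟨[], a, tl, rfl, ha, htl⟩

end ListHelpers

namespace DiGraph

variable {G : DiGraph V}

lemma chain_reach_last {a : V} : ∀ {l : List V}, List.Chain G.Edge a l →
    G.reach a ((a :: l).getLast (List.cons_ne_nil _ _))
  | [], _ => Relation.ReflTransGen.refl
  | y :: l', h => by
      rcases List.chain_cons.mp h with ⟨he, hc⟩
      have := chain_reach_last hc
      rw [List.getLast_cons (List.cons_ne_nil _ _)]
      exact Relation.ReflTransGen.head he this

lemma chain_reach_mem {a : V} : ∀ {l : List V} (_ : List.Chain G.Edge a l) (v : V)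
    (_ : v ∈ a :: l), G.reach a v ∧ G.reach v ((a :: l).getLast (List.cons_ne_nil _ _))
  | [], _, v, hv => by
      have : v = a := by simpa using hv
      subst this
      exact ⟨Relation.ReflTransGen.refl, Relation.ReflTransGen.refl⟩
  | y :: l', h, v, hv => by
      rcases List.chain_cons.mp h with ⟨he, hc⟩
      rw [List.getLast_cons (List.cons_ne_nil _ _)]
      rcases List.mem_cons.mp hv with rfl | hv'
      · exact ⟨Relation.ReflTransGen.refl,
          Relation.ReflTransGen.head he (chain_reach_last hc)⟩
      · obtain ⟨h1, h2⟩ := chain_reach_mem hc v hv'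
        exact ⟨Relation.ReflTransGen.head he h1, h2⟩

open Classical in
lemma chain_dedup : ∀ (n : ℕ) (x : V) (l : List V), (x :: l).length ≤ n →
    List.Chain G.Edge x l →
    ∃ l', List.Chain G.Edge x l' ∧
      (x :: l').getLast (List.cons_ne_nil _ _) = (x :: l).getLast (List.cons_ne_nil _ _) ∧
      (x :: l').Nodup ∧ ∀ v ∈ x :: l', v ∈ x :: l
  | 0, x, l, hn, hc => by simp at hn
  | n+1, x, l, hn, hc => by
      by_cases hx : x ∈ l
      · obtain ⟨l₁, y, l₂, rfl, hPy, hl₂⟩ := last_split (fun v => v = x) l ⟨x, hx, rfl⟩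
        subst hPy
        have hsuffix : (y :: l₂) <:+ (y :: (l₁ ++ y :: l₂)) := by
          refine ⟨y :: l₁, ?_⟩
          simp
        have hc' : List.Chain' G.Edge (y :: (l₁ ++ y :: l₂)) := hc
        have hc₂ : List.Chain' G.Edge (y :: l₂) := hc'.suffix hsuffix
        have hc₂' : List.Chain G.Edge y l₂ := hc₂
        have hlast : (y :: l₂).getLast (List.cons_ne_nil _ _) =
            (y :: (l₁ ++ y :: l₂)).getLast (List.cons_ne_nil _ _) := by
          have h2 := List.getLast_append_of_ne_nil (l := y :: l₁) (l' := y :: l₂) (by simp) (List.cons_ne_nil _ _)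
          exact h2.symm
        have hlen : (y :: l₂).length ≤ n := by
          simp only [List.length_cons, List.length_append] at hn ⊢
          omega
        obtain ⟨l', hcl', hlast', hnd', hsub'⟩ := chain_dedup n y l₂ hlen hc₂'
        refine ⟨l', hcl', ?_, hnd', ?_⟩
        · rw [hlast', hlast]
        · intro v hv
          have := hsub' v hv
          rcases List.mem_cons.mp this with rfl | hv'
          · simp
          · simp only [List.mem_cons, List.mem_append]
            right; right; right
            exact hv'
      · cases l with
        | nil => exact ⟨[], hc, rfl, by simp, by simp⟩
        | cons y l' =>
            rcases List.chain_cons.mp hc with ⟨he, hcy⟩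
            have hlen : (y :: l').length ≤ n := by
              simp only [List.length_cons] at hn ⊢
              omega
            obtain ⟨l'', hc'', hlast'', hnd'', hsub''⟩ := chain_dedup n y l' hlen hcy
            refine ⟨y :: l'', List.chain_cons.mpr ⟨he, hc''⟩, ?_, ?_, ?_⟩
            · rw [List.getLast_cons (List.cons_ne_nil _ _),
                List.getLast_cons (List.cons_ne_nil _ _)]
              exact hlast''
            · rw [List.nodup_cons]
              refine ⟨fun hmem => hx ?_, hnd''⟩
              exact hsub'' x hmem
            · intro v hv
              rcases List.mem_cons.mp hv with rfl | hv'
              · simp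
              · have := hsub'' v hv'
                simp only [List.mem_cons] at this ⊢
                tauto

lemma exists_reach_chain {a b : V} (h : G.reach a b) :
    ∃ (l : List V), List.Chain G.Edge a l ∧
      (a :: l).getLast (List.cons_ne_nil _ _) = b ∧ (a :: l).Nodup ∧
      ∀ v ∈ a :: l, G.reach a v ∧ G.reach v b := by
  obtain ⟨l0, hc0, hlast0⟩ := List.exists_isChain_cons_of_relationReflTransGen h
  obtain ⟨l, hc, hlast, hnd, hsub⟩ := chain_dedup (G := G) (a :: l0).length a l0 le_rfl hc0
  refine ⟨l, hc, hlast.trans hlast0, hnd, ?_⟩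
  intro v hv
  have h2 := chain_reach_mem hc v hv
  rw [hlast, hlast0] at h2
  exact h2

end DiGraph

namespace OW

variable {G : DiGraph V}

/-- Build an all-forward oriented walk from a chain. -/
noncomputable def ofChain : (x : V) → (l : List V) → List.Chain G.Edge x l →
    OW G x ((x :: l).getLast (List.cons_ne_nil _ _))
  | x, [], _ => OW.nil x
  | x, y :: l, h =>
      OW.cons true (show G.Adjb true x y by
          simpa [DiGraph.Adjb] using (List.chain_cons.mp h).1)
        (ofChain y l (List.chain_cons.mp h).2)

lemma sup_ofChain : ∀ (x : V) (l : List V) (h : List.Chain G.Edge x l),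
    (ofChain (G := G) x l h).sup = x :: l
  | x, [], _ => rfl
  | x, y :: l, h => by
      simp only [ofChain, sup_cons]
      exact congrArg (x :: ·) (sup_ofChain y l _)

lemma dirs_ofChain_all : ∀ (x : V) (l : List V) (h : List.Chain G.Edge x l)
    (d : Bool), d ∈ (ofChain (G := G) x l h).dirs → d = true
  | x, [], _, d => by simp [ofChain]
  | x, y :: l, h, d => by
      simp only [ofChain, dirs_cons]
      intro hd
      rcases List.mem_cons.mp hd with rfl | hd'
      · rfl
      · exact dirs_ofChain_all y l _ d hd'

lemma headData_ofChain (x y : V) (l : List V) (h : List.Chain G.Edge x (y :: l)) :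
    (ofChain (G := G) x (y :: l) h).headData = some (true, y) := rfl

lemma len_ofChain (x : V) (l : List V) (h : List.Chain G.Edge x l) :
    (ofChain (G := G) x l h).len = l.length := by
  have := sup_length (ofChain (G := G) x l h)
  rw [sup_ofChain] at this
  simp only [List.length_cons] at this
  omega

/-- facts about any triple of a walk -/
lemma triple_mem_facts {a b : V} (w : OW G a b) (t : Trip V) (ht : t ∈ w.triples) :
    t.d1 ∈ w.dirs ∧ t.d2 ∈ w.dirs ∧ t.mid ∈ w.sup ∧ t.prev ∈ w.sup ∧ t.next ∈ w.sup := by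
  rw [mem_triples_iff] at ht
  obtain ⟨j, hj, h1, h2, h3, h4, h5⟩ := ht
  exact ⟨h4 ▸ List.getElem_mem _, h5 ▸ List.getElem_mem _, h2 ▸ List.getElem_mem _,
    h1 ▸ List.getElem_mem _, h3 ▸ List.getElem_mem _⟩

end OW

section Pretreat

variable {G : DiGraph V} {X Y : V}

lemma noYedge (hY : G.de Y = ∅) {u : V} (h : G.Edge Y u) : False := by
  by_cases huY : u = Y
  · exact G.loopless Y (huY ▸ h)
  · have : u ∈ G.de Y := ⟨huY, Relation.TransGen.single h⟩
    rw [hY] at this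
    exact this

lemma reach_Y_eq (hY : G.de Y = ∅) {u : V} (h : G.reach Y u) : u = Y := by
  induction h with
  | refl => rfl
  | tail _ e ih => exact absurd (ih ▸ e) (fun he => noYedge hY he)

lemma reach_X_eq (hY : G.de Y = ∅) (hX : G.ch X ⊆ {Y}) {u : V}
    (h : G.reach X u) : u = X ∨ u = Y := by
  rcases (Relation.reflTransGen_iff_eq_or_transGen.mp h) with rfl | htg
  · exact Or.inl rfl
  · obtain ⟨w, hxw, hwu⟩ := (Relation.TransGen.head'_iff).mp htg
    have hwY : w = Y := hX hxw
    subst hwY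
    exact Or.inr (reach_Y_eq hY hwu)

lemma de_X_sub (hY : G.de Y = ∅) (hX : G.ch X ⊆ {Y}) : G.de X ⊆ {Y} := by
  rintro z ⟨hne, htg⟩
  rcases reach_X_eq hY hX htg.to_reflTransGen with rfl | rfl
  · exact absurd rfl hne
  · rfl

lemma X_notin_scc (hY : G.de Y = ∅) (hX : G.ch X ⊆ {Y}) {v : V}
    (hvX : v ≠ X) (hvY : v ≠ Y) : X ∉ G.scc v := by
  rintro ⟨h1, h2⟩
  rcases reach_X_eq hY hX h2 with rfl | rfl
  · exact hvX rfl
  · exact hvY rfl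

end Pretreat


namespace OW

variable {G : DiGraph V}

/-- every triple of `w` fails the σ-blocking condition -/
def OpenW (S : Set V) {a b : V} (w : OW G a b) : Prop := ∀ t ∈ w.triples, ¬ BAt G S t

lemma mem_anc_singleton {x y : V} : x ∈ G.anc {y} ↔ G.reach x y := by
  constructor
  · rintro ⟨s, hs, hr⟩
    rw [Set.mem_singleton_iff] at hs
    exact hs ▸ hr
  · intro h
    exact ⟨y, rfl, h⟩

lemma sup_eq_head_cons {a b : V} (w : OW G a b) : w.sup = a :: w.sup.tail := by
  cases w <;> rfl

lemma sup_of_len_zero {a b : V} (w : OW G a b) (h : w.len = 0) : w.sup = [a] := by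
  cases w with
  | nil v => rfl
  | cons d hd w' => simp [len] at h

lemma firstD_append₁ {a b c : V} (w₁ : OW G a b) (w₂ : OW G b c) (h : 0 < w₁.len) :
    (w₁.append w₂).firstD = w₁.firstD := by
  unfold firstD
  rw [headData_append₁ _ _ h]

lemma lastData_dir_mem_dirs : ∀ {a b : V} (w : OW G a b) {p : V} {d : Bool},
    w.lastData = some (p, d) → d ∈ w.dirs
  | _, _, .nil v, p, d => by simp [lastData]
  | a, _, .cons d' hd w', p, d => by
      intro h
      rw [lastData_cons] at h
      rcases Nat.eq_zero_or_pos w'.len with h0 | hl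
      · rw [lastDataA_of_len_zero w' h0] at h
        have h2 := Option.some.inj h
        have hd' : d' = d := congrArg Prod.snd h2
        subst hd'
        rw [dirs_cons]
        exact List.mem_cons_self
      · rw [← lastData_eq_lastDataA w' hl a d'] at h
        rw [dirs_cons]
        exact List.mem_cons_of_mem _ (lastData_dir_mem_dirs w' h)

lemma firstD_reverse {a b : V} (w : OW G a b) :
    w.reverse.firstD = w.lastData.map (fun pd => !pd.2) := by
  unfold firstD
  rw [headData_reverse]
  cases w.lastData <;> rfl

lemma mem_triples_reverse {a b : V} (w : OW G a b) (t : Trip V) :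
    t ∈ w.reverse.triples ↔ ∃ t₀ ∈ w.triples, t = flipT t₀ := by
  rw [triples_reverse, List.mem_reverse, List.mem_map]
  constructor
  · rintro ⟨t₀, h1, rfl⟩
    exact ⟨t₀, h1, rfl⟩
  · rintro ⟨t₀, h1, rfl⟩
    exact ⟨t₀, h1, rfl⟩

lemma openW_reverse {S : Set V} {a b : V} {w : OW G a b} (h : OpenW S w) :
    OpenW S w.reverse := by
  intro t ht
  rw [mem_triples_reverse] at ht
  obtain ⟨t₀, ht₀, rfl⟩ := ht
  rw [BAt_flip]
  exact h t₀ ht₀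

/-- build a walk from a chain, with specified endpoint -/
noncomputable def ofChainTo : (x : V) → (l : List V) → (b : V) →
    List.Chain G.Edge x l → (x :: l).getLast (List.cons_ne_nil _ _) = b → OW G x b
  | x, [], b, _, hb => by
      have : x = b := hb
      subst this
      exact OW.nil x
  | x, y :: l, b, h, hb =>
      OW.cons true (show G.Adjb true x y by
          simpa [DiGraph.Adjb] using (List.chain_cons.mp h).1)
        (ofChainTo y l b (List.chain_cons.mp h).2 (by
          rw [← hb, List.getLast_cons (List.cons_ne_nil _ _)]))

lemma sup_ofChainTo : ∀ (x : V) (l : List V) (b : V) (h : List.Chain G.Edge x l)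
    (hb : (x :: l).getLast (List.cons_ne_nil _ _) = b),
    (ofChainTo (G := G) x l b h hb).sup = x :: l
  | x, [], b, _, hb => by
      have : x = b := hb
      subst this
      rfl
  | x, y :: l, b, h, hb => by
      simp only [ofChainTo, sup_cons]
      exact congrArg (x :: ·) (sup_ofChainTo y l b _ _)

lemma dirs_ofChainTo_all : ∀ (x : V) (l : List V) (b : V) (h : List.Chain G.Edge x l)
    (hb : (x :: l).getLast (List.cons_ne_nil _ _) = b) (d : Bool),
    d ∈ (ofChainTo (G := G) x l b h hb).dirs → d = true
  | x, [], b, _, hb, d => by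
      have : x = b := hb
      subst this
      simp [ofChainTo]
  | x, y :: l, b, h, hb, d => by
      simp only [ofChainTo, dirs_cons]
      intro hd
      rcases List.mem_cons.mp hd with rfl | hd'
      · rfl
      · exact dirs_ofChainTo_all y l b _ _ d hd'

lemma len_ofChainTo (x : V) (l : List V) (b : V) (h : List.Chain G.Edge x l)
    (hb : (x :: l).getLast (List.cons_ne_nil _ _) = b) :
    (ofChainTo (G := G) x l b h hb).len = l.length := by
  have := sup_length (ofChainTo (G := G) x l b h hb)
  rw [sup_ofChainTo] at this
  simp only [List.length_cons] at this
  omega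

lemma triple_ofChainTo_facts (x : V) (l : List V) (b : V) (h : List.Chain G.Edge x l)
    (hb : (x :: l).getLast (List.cons_ne_nil _ _) = b) (t : Trip V)
    (ht : t ∈ (ofChainTo (G := G) x l b h hb).triples) :
    t.d1 = true ∧ t.d2 = true ∧ t.mid ∈ x :: l := by
  obtain ⟨hd1, hd2, hmid, _, _⟩ := triple_mem_facts _ t ht
  rw [sup_ofChainTo] at hmid
  exact ⟨dirs_ofChainTo_all x l b h hb _ hd1, dirs_ofChainTo_all x l b h hb _ hd2, hmid⟩

lemma mem_take_drop_unique {a b : V} (w : OW G a b) (u : V) (h : u ∈ w.sup)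
    (hN : w.sup.Nodup) (v : V) (hvt : v ∈ (takeUntil w u h).sup)
    (hvd : v ∈ (dropUntil w u h).sup) : v = u := by
  have hsplit := sup_split w u h
  have hNn : ((takeUntil w u h).sup.dropLast ++ (dropUntil w u h).sup).Nodup := by
    rw [← hsplit]; exact hN
  rw [List.nodup_append] at hNn
  have hdl : (takeUntil w u h).sup = (takeUntil w u h).sup.dropLast ++ [u] := by
    have h1 := List.dropLast_append_getLast (sup_ne_nil (takeUntil w u h))
    rw [getLast_sup] at h1
    exact h1.symm
  rw [hdl] at hvt
  rcases List.mem_append.mp hvt with hv1 | hv2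
  · exact absurd rfl (hNn.2.2 v hv1 v hvd)
  · simpa using hv2

lemma takeUntil_prefix_mono : ∀ {a b : V} (w : OW G a b) (c u : V) (hc : c ∈ w.sup)
    (_ : w.sup.Nodup) (hu : u ∈ (takeUntil w c hc).sup),
    ∃ hut : u ∈ w.sup, (takeUntil w u hut).sup <+: (takeUntil w c hc).sup
  | _, _, .nil v, c, u, hc, hN, hu => by
      have h' : c = v := List.mem_singleton.mp hc
      subst h'
      have h'' : u = c := by
        have := sup_of_len_zero (takeUntil (OW.nil c) c hc) (by rfl)
        rw [this] at hu
        simpa using hu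
      subst h''
      exact ⟨hc, List.prefix_refl _⟩
  | a, _, .cons d hd w', c, u, hc, hN, hu => by
      have hanotin : a ∉ w'.sup := by
        simp only [sup_cons, List.nodup_cons] at hN
        exact hN.1
      have hNw' : w'.sup.Nodup := by
        simp only [sup_cons, List.nodup_cons] at hN
        exact hN.2
      by_cases hac : a = c
      · subst hac
        have h0 : (takeUntil (OW.cons d hd w') a hc).len = 0 := takeUntil_self_len _ _
        rw [sup_of_len_zero _ h0] at hu
        have : u = a := by simpa using hu
        subst this
        refine ⟨hc, ?_⟩
        rw [sup_of_len_zero _ h0]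
      · rw [takeUntil_cons_ne d hd w' hc hac, sup_cons] at hu
        rcases List.mem_cons.mp hu with rfl | hu'
        · refine ⟨mem_sup_self _, ?_⟩
          rw [sup_of_len_zero _ (takeUntil_self_len _ _),
            takeUntil_cons_ne d hd w' hc hac]
          exact ⟨(w'.takeUntil c (by
            rcases List.mem_cons.mp hc with h' | h'
            · exact absurd h'.symm hac
            · exact h')).sup, rfl⟩
        · have hmemc : c ∈ w'.sup := by
            rcases List.mem_cons.mp hc with h' | h'
            · exact absurd h'.symm hac
            · exact h'
          have hu'sub : u ∈ w'.sup :=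
            (sup_takeUntil_prefix w' c hmemc).subset hu'
          have hua : ¬ a = u := fun e => hanotin (e ▸ hu'sub)
          obtain ⟨hut', hpfx⟩ := takeUntil_prefix_mono w' c u hmemc hNw' hu'
          refine ⟨by rw [sup_cons]; exact List.mem_cons_of_mem _ hut', ?_⟩
          rw [takeUntil_cons_ne d hd w' _ hua, takeUntil_cons_ne d hd w' hc hac]
          obtain ⟨r, hr⟩ := hpfx
          exact ⟨r, by simp only [sup_cons, List.cons_append]; rw [hr]⟩

lemma len_takeUntil_le_of_mem {a b : V} (w : OW G a b) (hN : w.sup.Nodup) (u v : V)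
    (hu : u ∈ w.sup) (hv : v ∈ (takeUntil w u hu).sup) :
    ∃ hvw : v ∈ w.sup, (takeUntil w v hvw).len ≤ (takeUntil w u hu).len ∧
      (v ≠ u → (takeUntil w v hvw).len < (takeUntil w u hu).len) := by
  obtain ⟨hvw, hpfx⟩ := takeUntil_prefix_mono w u v hu hN hv
  have hle := hpfx.length_le
  rw [sup_length, sup_length] at hle
  refine ⟨hvw, by omega, ?_⟩
  intro hne
  rcases Nat.lt_or_ge (takeUntil w v hvw).len (takeUntil w u hu).len with hlt | hge
  · exact hlt
  · exfalso
    have hll : (takeUntil w v hvw).sup.length = (takeUntil w u hu).sup.length := by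
      rw [sup_length, sup_length]
      omega
    have heq := hpfx.eq_of_length hll
    have h1 := getLast_sup (takeUntil w v hvw)
    have h2 := getLast_sup (takeUntil w u hu)
    simp only [heq] at h1
    exact hne (h1.symm.trans h2)

end OW


section MainArg

open OW

variable {G : DiGraph V} {Obs Z MBY : Set V} {X Y : V}

lemma follow : ∀ {v y : V} (u : OW G v y) {A : Set V}, u.firstD = some true →
    (∀ t ∈ u.triples, collT t → t.mid ∈ A) → v ∈ G.anc (A ∪ {y})
  | _, _, .nil _, A, hf, _ => by simp [firstD, headData] at hf
  | v, y, .cons (b := m) d hd u', A, hf, hcoll => by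
      have hd' : d = true := by
        have h1 : some d = some true := by simpa [firstD_cons] using hf
        exact Option.some.inj h1
      subst hd'
      have hedge : G.Edge v m := by simpa [DiGraph.Adjb] using hd
      rcases Nat.eq_zero_or_pos u'.len with h0 | hl
      · have hm : m = y := eq_of_len_zero u' h0
        subst hm
        exact ⟨m, Or.inr rfl, Relation.ReflTransGen.single hedge⟩
      · have hhd := headData_eq u' hl
        cases hb : (u'.dirs[0]'(by rw [dirs_length]; omega)) with
        | false =>
            have htrip : (⟨v, m, u'.sup[1]'(by rw [sup_length]; omega), true, false⟩ : Trip V)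
                ∈ (OW.cons true hd u').triples := by
              rw [triples_cons_eq, hhd, hb]
              simp [junc]
            have hmA := hcoll _ htrip ⟨rfl, rfl⟩
            exact DiGraph.mem_anc_trans (Relation.ReflTransGen.single hedge)
              (DiGraph.mem_anc_of_mem (Or.inl hmA))
        | true =>
            have hfd' : u'.firstD = some true := by
              rw [firstD_eq_dirs_zero u' hl, hb]
            have hcoll' : ∀ t ∈ u'.triples, collT t → t.mid ∈ A := fun t ht hcl =>
              hcoll t (triplesA_sub _ _ _ t ht) hcl
            have hrec := follow u' hfd' hcoll'
            exact DiGraph.mem_anc_trans (Relation.ReflTransGen.single hedge) hrec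

lemma Jfacts (hXY : X ≠ Y)
    (hZsub : Z ⊆ Obs \ {X, Y}) (hMB1 : MBY ⊆ Obs \ {Y})
    (hMB2 : ∀ W ∈ Obs \ (MBY ∪ {Y}), G.sigmaSep Y W MBY)
    (w : OW G X Y) (hN : w.sup.Nodup)
    (hopen : OpenW ((MBY \ {X}) ∩ G.anc (Z ∪ {X, Y})) w) :
    (∀ t ∈ w.triples, collT t → t.mid ∈ G.anc ((MBY \ {X}) ∩ G.anc (Z ∪ {X, Y}))) ∧
    (∀ t ∈ w.triples, ¬collT t → escT G t → t.mid ∉ MBY) ∧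
    (∀ t ∈ w.triples, collT t → t.mid ∈ G.anc (Z ∪ {X, Y})) ∧
    (∀ t ∈ w.triples, ¬collT t → escT G t → t.mid ∉ Z) := by
  set A := G.anc (Z ∪ {X, Y}) with hA
  set S' := (MBY \ {X}) ∩ A with hS'
  have hS'A : S' ⊆ A := Set.inter_subset_right
  have hancS'A : G.anc S' ⊆ A := DiGraph.anc_anc hS'A
  have hAX : G.anc (A ∪ {X}) ⊆ A := by
    apply DiGraph.anc_anc
    rintro v (hv | hv)
    · exact hv
    · rw [Set.mem_singleton_iff] at hv
      exact hv ▸ DiGraph.mem_anc_of_mem (Or.inr (by simp))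
  have hAY : G.anc (A ∪ {Y}) ⊆ A := by
    apply DiGraph.anc_anc
    rintro v (hv | hv)
    · exact hv
    · rw [Set.mem_singleton_iff] at hv
      exact hv ▸ DiGraph.mem_anc_of_mem (Or.inr (by simp))
  have h1 : ∀ t ∈ w.triples, collT t → t.mid ∈ G.anc S' := by
    intro t ht hc
    by_contra hnm
    exact hopen t ht (Or.inl ⟨hc, hnm⟩)
  have h2 : ∀ t ∈ w.triples, collT t → t.mid ∈ A := fun t ht hc => hancS'A (h1 t ht hc)
  have h3 : ∀ t ∈ w.triples, ¬collT t → t.mid ∈ A := by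
    intro t ht hnc
    obtain ⟨hmem, hne_a, hne_b, hdrop, htake⟩ := decomp w hN t ht
    cases hd2 : t.d2 with
    | true =>
        have hfd : (dropUntil w t.mid hmem).firstD = some true := by
          unfold OW.firstD
          rw [hdrop, hd2]
          rfl
        have hcq : ∀ t' ∈ (dropUntil w t.mid hmem).triples, collT t' → t'.mid ∈ A :=
          fun t' ht' hc' => h2 t' (triples_dropUntil_sub w t.mid hmem t' ht') hc'
        exact hAY (follow _ hfd hcq)
    | false =>
        have hd1 : t.d1 = false := by
          cases hb1 : t.d1 with
          | true => exact absurd ⟨hb1, hd2⟩ hnc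
          | false => rfl
        have hfd : (takeUntil w t.mid hmem).reverse.firstD = some true := by
          rw [firstD_reverse, htake, hd1]
          rfl
        have hcq : ∀ t' ∈ (takeUntil w t.mid hmem).reverse.triples, collT t' → t'.mid ∈ A := by
          intro t' ht' hc'
          rw [mem_triples_reverse] at ht'
          obtain ⟨t₀, ht₀, rfl⟩ := ht'
          rw [collT_flip] at hc'
          exact h2 t₀ (triples_takeUntil_sub w t.mid hmem t₀ ht₀) hc'
        exact hAX (follow _ hfd hcq)
  have h4 : ∀ t ∈ w.triples, ¬collT t → escT G t → t.mid ∉ MBY := by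
    intro t ht hnc hesc hM
    obtain ⟨hmem, hne_a, hne_b, _, _⟩ := decomp w hN t ht
    have hmidS' : t.mid ∈ S' := ⟨⟨hM, by simpa using hne_a⟩, h3 t ht hnc⟩
    exact hopen t ht (Or.inr ⟨hnc, hmidS', hesc⟩)
  refine ⟨h1, h4, fun t ht hc => h2 t ht hc, ?_⟩
  -- esc non-colliders are not in Z
  intro t ht hnc hesc hZm
  have hMm := h4 t ht hnc hesc
  obtain ⟨hmem, hne_a, hne_b, hdrop, htake⟩ := decomp w hN t ht
  have hOpenM : OpenW MBY (dropUntil w t.mid hmem) := by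
    intro t' ht' hBA
    have ht'' := triples_dropUntil_sub w t.mid hmem t' ht'
    rcases hBA with ⟨hc', hnmem⟩ | ⟨hnc', hmem', hesc'⟩
    · refine hnmem (DiGraph.anc_mono ?_ (h1 t' ht'' hc'))
      exact fun v hv => hv.1.1
    · exact h4 t' ht'' hnc' hesc' hmem'
  have hOpenR : OpenW MBY (dropUntil w t.mid hmem).reverse := openW_reverse hOpenM
  have hNq : (dropUntil w t.mid hmem).reverse.sup.Nodup := by
    rw [sup_reverse, List.nodup_reverse]
    exact ((sup_dropUntil_suffix w t.mid hmem).sublist).nodup hN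
  have hlq : 0 < (dropUntil w t.mid hmem).reverse.len := by
    rw [len_reverse]
    exact len_pos_of_ne _ hne_b
  obtain ⟨hObs, hneXY⟩ := hZsub hZm
  have hsep := hMB2 t.mid ⟨hObs, by
    simp only [Set.mem_union, Set.mem_singleton_iff] at *
    push_neg
    refine ⟨hMm, ?_⟩
    intro e
    exact hneXY (by simp [e])⟩
  have hblocked := hsep ((dropUntil w t.mid hmem).reverse.toGPath hNq hlq)
  rw [toGPath_blocked_iff] at hblocked
  obtain ⟨t', ht', hBA⟩ := hblocked
  exact hOpenR t' ht' hBA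

end MainArg


section CoreArg

open OW Classical

variable {G : DiGraph V} {Z : Set V} {X Y : V}

lemma getLast_eq_of_eq {α : Type} {l₁ l₂ : List α} (h : l₁ = l₂) (h₁ : l₁ ≠ []) :
    l₁.getLast h₁ = l₂.getLast (h ▸ h₁) := by subst h; rfl

lemma chainseg_facts {W : V} {c w' : V} {l k₁ k₂ : List V}
    (hchain : List.Chain G.Edge c l)
    (hlast : (c :: l).getLast (List.cons_ne_nil _ _) = W)
    (hsplit : c :: l = k₁ ++ w' :: k₂) :
    List.Chain G.Edge w' k₂ ∧ (w' :: k₂).getLast (List.cons_ne_nil _ _) = W := by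
  constructor
  · have h1 : List.Chain' G.Edge (c :: l) := hchain
    exact h1.suffix ⟨k₁, hsplit.symm⟩
  · have e1 := getLast_eq_of_eq hsplit (List.cons_ne_nil _ _)
    have e2 := List.getLast_append_of_ne_nil (l := k₁) (l' := w' :: k₂) (by simp) (List.cons_ne_nil _ _)
    exact (e2.symm.trans e1.symm).trans hlast

/-- The core inductive argument. -/
lemma core (hY : G.de Y = ∅) (hXc : G.ch X ⊆ {Y}) (hXY : X ≠ Y)
    (hZadj : ∀ p : GPath G X Y, p.dir 0 = false → p.sigmaBlocked Z) :
    ∀ (n : ℕ) {b : V} (pr : OW G X b) (t : OW G b Y),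
      t.len ≤ n →
      pr.sup.Nodup → t.sup.Nodup →
      (∀ v ∈ pr.sup, v ∈ t.sup → v = b) →
      X ∉ t.sup → Y ∉ pr.sup →
      0 < pr.len →
      pr.firstD = some false →
      (pr.lastData).map Prod.snd = some false →
      (∀ t' ∈ pr.triples, ¬ BAt G Z t') →
      b ∉ Z →
      (∀ t' ∈ t.triples, collT t' → t'.mid ∈ G.anc (Z ∪ {X, Y})) →
      (∀ t' ∈ t.triples, ¬collT t' → escT G t' → t'.mid ∉ Z) →
      False
  | 0, b, pr, t, hlen, hNpr, hNt, hdisj, hXt, hYpr, hprlen, hprfd, hprld, hprop, hbZ,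
      hJ1, hJ2 => by
      have hbY : b = Y := eq_of_len_zero t (by omega)
      exact hYpr (hbY ▸ mem_sup_last pr)
  | (n+1), b, pr, t, hlen, hNpr, hNt, hdisj, hXt, hYpr, hprlen, hprfd, hprld, hprop, hbZ,
      hJ1, hJ2 => by
      classical
      have final : ∀ (ρ : OW G X Y), ρ.sup.Nodup → 0 < ρ.len → ρ.firstD = some false →
          (∀ t' ∈ ρ.triples, ¬ BAt G Z t') → False := by
        intro ρ h1 h2 h3 h4
        have hg := hZadj (ρ.toGPath h1 h2) (toGPath_dir_zero _ _ _ h3)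
        rw [toGPath_blocked_iff] at hg
        obtain ⟨t', ht', hBA⟩ := hg
        exact h4 t' ht' hBA
      rcases hld : pr.lastData with _ | ⟨pp, dd⟩
      · rw [hld] at hprld; simp at hprld
      have hdd : dd = false := by rw [hld] at hprld; simpa using hprld
      subst hdd
      by_cases hbad : ∀ t' ∈ t.triples, collT t' → t'.mid ∈ G.anc Z
      case pos =>
        have hbtail : b ∉ t.sup.tail := by
          intro hmem
          have h1 := sup_eq_head_cons t
          rw [h1, List.nodup_cons] at hNt
          exact hNt.1 hmem
        have hNρ : (pr.append t).sup.Nodup := by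
          rw [sup_append]
          refine List.Nodup.append hNpr ?_ ?_
          · have h1 := sup_eq_head_cons t
            rw [h1, List.nodup_cons] at hNt
            exact hNt.2
          · intro v hv hvt
            have hvt' : v ∈ t.sup := by
              rw [sup_eq_head_cons t]
              exact List.mem_cons_of_mem _ hvt
            exact hbtail ((hdisj v hv hvt') ▸ hvt)
        have hlρ : 0 < (pr.append t).len := by rw [len_append]; omega
        have hfdρ : (pr.append t).firstD = some false := by
          rw [firstD_append₁ _ _ hprlen]; exact hprfd
        refine final (pr.append t) hNρ hlρ hfdρ ?_
        intro t' ht'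
        rw [triples_append] at ht'
        rcases List.mem_append.mp ht' with h12 | h3
        · rcases List.mem_append.mp h12 with h1 | hj
          · exact hprop t' h1
          · rcases hhd : t.headData with _ | ⟨d₂, nn⟩
            · rw [hld, hhd] at hj; simp [junc] at hj
            · rw [hld, hhd] at hj
              simp only [junc, List.mem_singleton] at hj
              subst hj
              intro hBA
              rcases hBA with ⟨⟨hc1, _⟩, _⟩ | ⟨_, hmem, _⟩
              · simp [collT] at hc1
              · exact hbZ hmem
        · intro hBA
          rcases hBA with ⟨hc, hnm⟩ | ⟨hnc, hm, hesc⟩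
          · exact hnm (hbad t' h3 hc)
          · exact hJ2 t' h3 hnc hesc hm
      case neg =>
        push_neg at hbad
        obtain ⟨tc0, htc0, hcoll0, hnZ0⟩ := hbad
        have Hex : ∃ n', ∃ x, ∃ hx : x ∈ t.sup,
            (∃ tc ∈ t.triples, collT tc ∧ tc.mid = x ∧ x ∉ G.anc Z) ∧
            (takeUntil t x hx).len = n' :=
          ⟨_, tc0.mid, (triple_mem_facts t tc0 htc0).2.2.1,
            ⟨tc0, htc0, hcoll0, rfl, hnZ0⟩, rfl⟩
        obtain ⟨c, hc_mem, ⟨tc, htc, hcoll_c, hmid_c, hc_nZ⟩, hc_len⟩ := Nat.find_spec Hex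
        obtain ⟨hc_mem', hc_ne_b0, hc_ne_Y0, _, _⟩ := decomp t hNt tc htc
        have hc_ne_b : c ≠ b := hmid_c ▸ hc_ne_b0
        have hc_ne_Y : c ≠ Y := hmid_c ▸ hc_ne_Y0
        have hcA : c ∈ G.anc (Z ∪ {X, Y}) := hmid_c ▸ hJ1 tc htc hcoll_c
        have hc_XY : G.reach c X ∨ G.reach c Y := by
          rw [DiGraph.anc_union] at hcA
          rcases hcA with h | h
          · exact absurd h hc_nZ
          · have hpair : ({X, Y} : Set V) = {X} ∪ {Y} := by rw [Set.insert_eq]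
            rw [hpair, DiGraph.anc_union] at h
            rcases h with h | h
            · exact Or.inl (mem_anc_singleton.mp h)
            · exact Or.inr (mem_anc_singleton.mp h)
        by_cases hcX : G.reach c X
        case pos =>
          obtain ⟨l, hchain, hlast, hndl, hprops⟩ := DiGraph.exists_reach_chain hcX
          have hchain_nZ : ∀ v ∈ c :: l, v ∉ G.anc Z := fun v hv hvZ =>
            hc_nZ (DiGraph.mem_anc_trans (hprops v hv).1 hvZ)
          have hchain_nY : ∀ v ∈ c :: l, v ≠ Y := by
            intro v hv e
            have h2 : G.reach Y X := e ▸ (hprops v hv).2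
            exact hXY (reach_Y_eq hY h2)
          have hPex : ∃ x ∈ c :: l, x ∈ (dropUntil t c hc_mem).sup :=
            ⟨c, by simp, mem_sup_self _⟩
          obtain ⟨k₁, w', k₂, hsplit, hw'mem, hk₂⟩ :=
            last_split (fun v => v ∈ (dropUntil t c hc_mem).sup) _ hPex
          obtain ⟨hk₂chain, hk₂last⟩ := chainseg_facts hchain hlast hsplit
          have hsegsub : ∀ v ∈ w' :: k₂, v ∈ c :: l := by
            intro v hv
            rw [hsplit]
            exact List.mem_append_right _ hv
          have hw'nX : w' ≠ X := by
            intro e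
            subst e
            exact hXt ((sup_dropUntil_suffix t c hc_mem).subset hw'mem)
          have hk₂ne : k₂ ≠ [] := by
            intro e
            subst e
            exact hw'nX hk₂last
          set pr'' := ofChainTo w' k₂ X hk₂chain hk₂last with hpr''
          have hsuppr'' : pr''.sup = w' :: k₂ := sup_ofChainTo _ _ _ _ _
          have hlenpr'' : 0 < pr''.len := by
            rw [len_ofChainTo]
            cases k₂ with
            | nil => exact absurd rfl hk₂ne
            | cons a as => simp
          have htsub1 : ∀ v ∈ (dropUntil t c hc_mem).sup, v ∈ t.sup :=
            fun v hv => (sup_dropUntil_suffix t c hc_mem).subset hv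
          have htsub : ∀ v ∈ (dropUntil (dropUntil t c hc_mem) w' hw'mem).sup,
              v ∈ (dropUntil t c hc_mem).sup :=
            fun v hv => (sup_dropUntil_suffix _ w' hw'mem).subset hv
          have htr : ∀ tt ∈ (dropUntil (dropUntil t c hc_mem) w' hw'mem).triples,
              tt ∈ t.triples := fun tt htt =>
            triples_dropUntil_sub _ _ _ tt (triples_dropUntil_sub _ _ _ tt htt)
          refine core hY hXc hXY hZadj n pr''.reverse
            (dropUntil (dropUntil t c hc_mem) w' hw'mem)
            ?_ ?_ ?_ ?_ ?_ ?_ ?_ ?_ ?_ ?_ ?_ ?_ ?_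
          · have h1 : (dropUntil (dropUntil t c hc_mem) w' hw'mem).len ≤
                (dropUntil t c hc_mem).len := len_dropUntil_le _ _ _
            have h2 : (dropUntil t c hc_mem).len < t.len :=
              len_dropUntil_lt t c hc_mem hc_ne_b
            omega
          · rw [sup_reverse, List.nodup_reverse, hsuppr'']
            refine hndl.sublist ?_
            rw [hsplit]
            exact List.sublist_append_right _ _
          · exact ((sup_dropUntil_suffix _ w' hw'mem).sublist).nodup
              (((sup_dropUntil_suffix t c hc_mem).sublist).nodup hNt)
          · intro v hv hvt
            rw [sup_reverse, List.mem_reverse, hsuppr''] at hv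
            rcases List.mem_cons.mp hv with rfl | hv'
            · rfl
            · exact absurd (htsub v hvt) (hk₂ v hv')
          · intro hmem
            exact hXt (htsub1 _ (htsub _ hmem))
          · intro hmem
            rw [sup_reverse, List.mem_reverse, hsuppr''] at hmem
            exact hchain_nY Y (hsegsub _ hmem) rfl
          · rw [len_reverse]
            exact hlenpr''
          · rw [firstD_reverse, lastData_eq_lastDataA pr'' hlenpr'' w' true]
            have hd := lastData_dir_mem_dirs pr''
              (lastData_eq_lastDataA pr'' hlenpr'' w' true)
            have hdt := dirs_ofChainTo_all w' k₂ X hk₂chain hk₂last _ hd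
            simp only [Option.map_some]
            rw [hdt]
            rfl
          · rw [lastData_reverse, headData_eq pr'' hlenpr'']
            have hd0 : pr''.dirs[0]'(by rw [dirs_length]; omega) = true :=
              dirs_ofChainTo_all w' k₂ X hk₂chain hk₂last _ (List.getElem_mem _)
            rw [hd0]
            rfl
          · intro tt htt
            rw [mem_triples_reverse] at htt
            obtain ⟨t₀, ht₀, rfl⟩ := htt
            rw [BAt_flip]
            obtain ⟨hd1, hd2, hmid⟩ :=
              triple_ofChainTo_facts w' k₂ X hk₂chain hk₂last t₀ ht₀
            intro hBA
            rcases hBA with ⟨⟨_, hcc⟩, _⟩ | ⟨_, hm, _⟩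
            · rw [hd2] at hcc; exact Bool.noConfusion hcc
            · exact hchain_nZ _ (hsegsub _ hmid) (DiGraph.mem_anc_of_mem hm)
          · intro hw'Z
            exact hchain_nZ w' (hsegsub _ (by simp)) (DiGraph.mem_anc_of_mem hw'Z)
          · exact fun tt htt hcc => hJ1 tt (htr tt htt) hcc
          · exact fun tt htt hnc hesc => hJ2 tt (htr tt htt) hnc hesc
        case neg =>
          have hcY : G.reach c Y := hc_XY.resolve_left hcX
          obtain ⟨l, hchain, hlast, hndl, hprops⟩ := DiGraph.exists_reach_chain hcY
          have hchain_nZ : ∀ v ∈ c :: l, v ∉ G.anc Z := fun v hv hvZ =>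
            hc_nZ (DiGraph.mem_anc_trans (hprops v hv).1 hvZ)
          have hchain_nX : ∀ v ∈ c :: l, v ≠ X := by
            intro v hv e
            exact hcX (e ▸ (hprops v hv).1)
          have hPex : ∃ x ∈ c :: l, x ∈ pr.sup ∨ x ∈ (takeUntil t c hc_mem).sup :=
            ⟨c, by simp, Or.inr (mem_sup_last _)⟩
          obtain ⟨k₁, u, k₂, hsplit, humem, hk₂⟩ :=
            last_split (fun v => v ∈ pr.sup ∨ v ∈ (takeUntil t c hc_mem).sup) _ hPex
          obtain ⟨hk₂chain, hk₂last⟩ := chainseg_facts hchain hlast hsplit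
          have hsegsub : ∀ v ∈ u :: k₂, v ∈ c :: l := by
            intro v hv
            rw [hsplit]
            exact List.mem_append_right _ hv
          have hu_chain : u ∈ c :: l := hsegsub u (by simp)
          have hu_nX : u ≠ X := hchain_nX u hu_chain
          have hu_nY : u ≠ Y := by
            intro e
            rcases humem with h | h
            · exact hYpr (e ▸ h)
            · have h2 : Y ∈ (takeUntil t c hc_mem).sup := e ▸ h
              exact hc_ne_Y (mem_take_drop_unique t c hc_mem hNt Y h2
                (mem_sup_last _)).symm
          have hk₂ne : k₂ ≠ [] := by
            intro e
            subst e
            exact hu_nY hk₂last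
          set cw := ofChainTo u k₂ Y hk₂chain hk₂last with hcw
          have hsupcw : cw.sup = u :: k₂ := sup_ofChainTo _ _ _ _ _
          have hlencw : 0 < cw.len := by
            rw [len_ofChainTo]
            cases k₂ with
            | nil => exact absurd rfl hk₂ne
            | cons a as => simp
          have hcwtrip : ∀ tt ∈ cw.triples, ¬ BAt G Z tt := by
            intro tt htt hBA
            obtain ⟨hd1, hd2, hmid⟩ :=
              triple_ofChainTo_facts u k₂ Y hk₂chain hk₂last tt htt
            rcases hBA with ⟨⟨_, hcc⟩, _⟩ | ⟨_, hm, _⟩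
            · rw [hd2] at hcc; exact Bool.noConfusion hcc
            · exact hchain_nZ _ (hsegsub _ hmid) (DiGraph.mem_anc_of_mem hm)
          have hhdcw : cw.headData = some (true, cw.sup[1]'(by rw [sup_length]; omega)) := by
            rw [headData_eq cw hlencw]
            congr 1
            rw [dirs_ofChainTo_all u k₂ Y hk₂chain hk₂last _ (List.getElem_mem _)]
          have hu_nZ : u ∉ Z := fun hm =>
            hchain_nZ u hu_chain (DiGraph.mem_anc_of_mem hm)
          have hk₂nd : k₂.Nodup := by
            have h1 : List.Sublist (u :: k₂) (c :: l) := by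
              rw [hsplit]; exact List.sublist_append_right _ _
            exact (((List.sublist_cons_self u k₂).trans h1).nodup) hndl
          by_cases hupr : u ∈ pr.sup
          case pos =>
            set prA := takeUntil pr u hupr with hprA
            have hNprA : prA.sup.Nodup :=
              (sup_takeUntil_prefix pr u hupr).sublist.nodup hNpr
            have hρN : (prA.append cw).sup.Nodup := by
              rw [sup_append, hsupcw]
              refine List.Nodup.append hNprA hk₂nd ?_
              intro v hv hvk
              exact (hk₂ v hvk) (Or.inl ((sup_takeUntil_prefix pr u hupr).subset hv))
            have hlenA : 0 < prA.len := len_takeUntil_pos pr u hupr hu_nX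
            have hρl : 0 < (prA.append cw).len := by rw [len_append]; omega
            have hρfd : (prA.append cw).firstD = some false := by
              rw [firstD_append₁ _ _ hlenA]
              show (prA.headData).map Prod.fst = some false
              rw [headData_takeUntil pr u hupr hu_nX]
              exact hprfd
            refine final _ hρN hρl hρfd ?_
            intro t' ht'
            rw [triples_append] at ht'
            rcases List.mem_append.mp ht' with h12 | h3
            · rcases List.mem_append.mp h12 with h1 | hj
              · exact hprop t' (triples_takeUntil_sub pr u hupr t' h1)
              · rcases hldA : prA.lastData with _ | ⟨qq, ee⟩
                · rw [hldA] at hj; simp [junc] at hj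
                · rw [hldA, hhdcw] at hj
                  simp only [junc, List.mem_singleton] at hj
                  subst hj
                  intro hBA
                  rcases hBA with ⟨⟨_, hcc⟩, _⟩ | ⟨_, hm, _⟩
                  · exact Bool.noConfusion hcc
                  · exact hu_nZ hm
            · exact hcwtrip t' h3
          case neg =>
            have hu_tc : u ∈ (takeUntil t c hc_mem).sup := humem.resolve_left hupr
            have hu_t : u ∈ t.sup := (sup_takeUntil_prefix t c hc_mem).subset hu_tc
            have hu_nb : u ≠ b := fun e => hupr (by rw [e]; exact mem_sup_last pr)
            set tu := takeUntil t u hu_t with htu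
            have hNtu : tu.sup.Nodup := (sup_takeUntil_prefix t u hu_t).sublist.nodup hNt
            have htu_sub_tc : ∀ v ∈ tu.sup, v ∈ (takeUntil t c hc_mem).sup := by
              obtain ⟨hut4, hpfx4⟩ := takeUntil_prefix_mono t c u hc_mem hNt hu_tc
              intro v hv
              exact hpfx4.subset hv
            have htu_coll : ∀ tt ∈ tu.triples, collT tt → tt.mid ∈ G.anc Z := by
              intro tt htt hcc
              by_contra hbadm
              have htt_t : tt ∈ t.triples := triples_takeUntil_sub t u hu_t tt htt
              obtain ⟨hmm, hmm_ne_b, hmm_ne_u, _, _⟩ := decomp tu hNtu tt htt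
              obtain ⟨hmw, hle1, hlt1⟩ := len_takeUntil_le_of_mem t hNt u tt.mid hu_t hmm
              have hlt := hlt1 hmm_ne_u
              obtain ⟨hut2, hle2, _⟩ := len_takeUntil_le_of_mem t hNt c u hc_mem hu_tc
              have he : (takeUntil t u hut2).len = (takeUntil t u hu_t).len := rfl
              have hfin : (takeUntil t tt.mid hmw).len < Nat.find Hex := by
                rw [← hc_len]
                omega
              exact Nat.find_min Hex hfin ⟨tt.mid, hmw, ⟨tt, htt_t, hcc, rfl, hbadm⟩, rfl⟩
            have htulen : 0 < tu.len := len_takeUntil_pos t u hu_t hu_nb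
            have hNmid : (pr.append tu).sup.Nodup := by
              rw [sup_append]
              refine List.Nodup.append hNpr ?_ ?_
              · have h1 := sup_eq_head_cons tu
                have h2 := hNtu
                rw [h1, List.nodup_cons] at h2
                exact h2.2
              · intro v hv hvt
                have hvt' : v ∈ tu.sup := by
                  rw [sup_eq_head_cons tu]
                  exact List.mem_cons_of_mem _ hvt
                have hvb : v = b := hdisj v hv ((sup_takeUntil_prefix t u hu_t).subset hvt')
                subst hvb
                have h1 := sup_eq_head_cons tu
                have h2 := hNtu
                rw [h1, List.nodup_cons] at h2
                exact h2.1 hvt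
            have hρN : ((pr.append tu).append cw).sup.Nodup := by
              rw [sup_append, hsupcw]
              refine List.Nodup.append hNmid hk₂nd ?_
              intro v hv hvk
              rw [sup_append] at hv
              rcases List.mem_append.mp hv with h | h
              · exact hk₂ v hvk (Or.inl h)
              · have hv2 : v ∈ tu.sup := by
                  rw [sup_eq_head_cons tu]
                  exact List.mem_cons_of_mem _ h
                exact hk₂ v hvk (Or.inr (htu_sub_tc v hv2))
            have hmidlen : 0 < (pr.append tu).len := by rw [len_append]; omega
            have hρl : 0 < ((pr.append tu).append cw).len := by rw [len_append]; omega
            have hρfd : ((pr.append tu).append cw).firstD = some false := by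
              rw [firstD_append₁ _ _ hmidlen, firstD_append₁ _ _ hprlen]
              exact hprfd
            refine final _ hρN hρl hρfd ?_
            intro t' ht'
            rw [triples_append] at ht'
            rcases List.mem_append.mp ht' with h12 | h3
            · rcases List.mem_append.mp h12 with hmid | hjunc2
              · rw [triples_append] at hmid
                rcases List.mem_append.mp hmid with h12' | h3'
                · rcases List.mem_append.mp h12' with h1' | hj'
                  · exact hprop t' h1'
                  · rcases hhdtu : tu.headData with _ | ⟨d₂', y₁⟩
                    · rw [hld, hhdtu] at hj'; simp [junc] at hj'
                    · rw [hld, hhdtu] at hj'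
                      simp only [junc, List.mem_singleton] at hj'
                      subst hj'
                      intro hBA
                      rcases hBA with ⟨⟨hc1, _⟩, _⟩ | ⟨_, hm, _⟩
                      · exact Bool.noConfusion hc1
                      · exact hbZ hm
                · intro hBA
                  rcases hBA with ⟨hcc, hnm⟩ | ⟨hnc, hm, hesc⟩
                  · exact hnm (htu_coll t' h3' hcc)
                  · exact hJ2 t' (triples_takeUntil_sub t u hu_t t' h3') hnc hesc hm
              · rcases hld2 : (pr.append tu).lastData with _ | ⟨qq, ee⟩
                · rw [hld2] at hjunc2; simp [junc] at hjunc2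
                · rw [hld2, hhdcw] at hjunc2
                  simp only [junc, List.mem_singleton] at hjunc2
                  subst hjunc2
                  intro hBA
                  rcases hBA with ⟨⟨_, hcc⟩, _⟩ | ⟨_, hm, _⟩
                  · exact Bool.noConfusion hcc
                  · exact hu_nZ hm
            · exact hcwtrip t' h3
  termination_by n => n

end CoreArg


section FinalAssembly

open OW

variable {G : DiGraph V} {Obs Z MBY : Set V} {X Y : V}

lemma main_aux (hY : G.de Y = ∅) (hXc : G.ch X ⊆ {Y}) (hXY : X ≠ Y)
    (hZsub : Z ⊆ Obs \ {X, Y})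
    (hZadj : ∀ p : GPath G X Y, p.dir 0 = false → p.sigmaBlocked Z)
    (hMB1 : MBY ⊆ Obs \ {Y})
    (hMB2 : ∀ W ∈ Obs \ (MBY ∪ {Y}), G.sigmaSep Y W MBY) :
    ∀ {x y : V} (w : OW G x y), x = X → y = Y → w.sup.Nodup → 0 < w.len →
      w.firstD = some false → OpenW ((MBY \ {X}) ∩ G.anc (Z ∪ {X, Y})) w → False := by
  intro x y w hx hy
  have hx' : X = x := hx.symm
  have hy' : Y = y := hy.symm
  subst hx'
  subst hy'
  intro hN hl hfd hopen
  obtain ⟨hJ1S, hJ4, hJ1A, hJ2w⟩ := Jfacts hXY hZsub hMB1 hMB2 w hN hopen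
  cases w with
  | nil => simp [len] at hl
  | cons d hd w₀ =>
      rename_i m
      have hd' : d = false := by
        have h1 : some d = some false := by simpa [firstD_cons] using hfd
        exact Option.some.inj h1
      subst hd'
      have hXnot : X ∉ w₀.sup := by
        simp only [sup_cons, List.nodup_cons] at hN
        exact hN.1
      have hNw₀ : w₀.sup.Nodup := by
        simp only [sup_cons, List.nodup_cons] at hN
        exact hN.2
      have hedge : G.Edge m X := by simpa [DiGraph.Adjb] using hd
      have hmX : m ≠ X := fun e => hXnot (e ▸ mem_sup_self w₀)
      rcases Nat.eq_zero_or_pos w₀.len with h0 | hl₀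
      · have hm : m = Y := eq_of_len_zero w₀ h0
        exact noYedge hY (hm ▸ hedge)
      · have hmY : m ≠ Y := ends_ne w₀ hl₀ hNw₀
        have hXscc : X ∉ G.scc m := X_notin_scc hY hXc hmX hmY
        have htrip : (⟨X, m, w₀.sup[1]'(by rw [sup_length]; omega), false,
            w₀.dirs[0]'(by rw [dirs_length]; omega)⟩ : Trip V)
            ∈ (OW.cons false hd w₀).triples := by
          rw [triples_cons_eq, headData_eq w₀ hl₀]
          simp [junc]
        have hnc : ¬ collT (⟨X, m, w₀.sup[1]'(by rw [sup_length]; omega), false,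
            w₀.dirs[0]'(by rw [dirs_length]; omega)⟩ : Trip V) := by
          intro hcc
          exact Bool.noConfusion hcc.1
        have hesc : escT G (⟨X, m, w₀.sup[1]'(by rw [sup_length]; omega), false,
            w₀.dirs[0]'(by rw [dirs_length]; omega)⟩ : Trip V) :=
          Or.inr ⟨rfl, hXscc⟩
        have hmZ : m ∉ Z := hJ2w _ htrip hnc hesc
        refine core hY hXc hXY hZadj w₀.len (OW.cons false hd (OW.nil m)) w₀
          le_rfl ?_ hNw₀ ?_ hXnot ?_ ?_ ?_ ?_ ?_ hmZ ?_ ?_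
        · exact List.nodup_cons.mpr ⟨by simpa using Ne.symm hmX, by simp⟩
        · intro v hv hvt
          simp only [sup_cons, sup_nil, List.mem_cons, List.mem_singleton,
            List.not_mem_nil, or_false] at hv
          rcases hv with rfl | rfl
          · exact absurd hvt hXnot
          · rfl
        · simp only [sup_cons, sup_nil, List.mem_cons, List.mem_singleton,
            List.not_mem_nil, or_false]
          push_neg
          exact ⟨hXY.symm, fun e => hmY e.symm⟩
        · simp [len]
        · rfl
        · rfl
        · intro t' ht'
          simp [triples] at ht'
        · exact fun tt htt hcc => hJ1A tt (triplesA_sub _ _ _ tt htt) hcc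
        · exact fun tt htt hnc' hesc' => hJ2w tt (triplesA_sub _ _ _ tt htt) hnc' hesc'

end FinalAssembly


end BackdoorAux


/-- Pre-treatment assumption: the outcome `Y` has no descendants and the
treatment `X` has no children except possibly `Y`. -/
theorem exists_backdoor_iff_exists_in_MB {V : Type} [Fintype V]
    (G : DiGraph V) (Obs Lat : Set V)
    (hpart : Obs ∪ Lat = Set.univ) (hdisj : Obs ∩ Lat = ∅)
    (X Y : V) (hX : X ∈ Obs) (hY : Y ∈ Obs) (hXY : X ≠ Y)
    (hpre : PreTreatment G X Y)
    (MBY : Set V) (hMBY : G.IsSigmaMB Obs Y MBY) :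
    (∃ Z ⊆ Obs \ {X, Y}, G.IsBackdoorAdjustment X Y Z) ↔
    (∃ Z ⊆ MBY \ {X}, G.IsBackdoorAdjustment X Y Z) := by
    classical
  obtain ⟨hde, hch⟩ := hpre
  obtain ⟨hMB1, hMB2, -⟩ := hMBY
  constructor
  · rintro ⟨Z, hZsub, hXZ, hYZ, hdeZ, hblock⟩
    refine ⟨(MBY \ {X}) ∩ G.anc (Z ∪ {X, Y}), Set.inter_subset_left, ?_, ?_, ?_, ?_⟩
    · intro h
      exact h.1.2 rfl
    · intro h
      exact (hMB1 h.1.1).2 rfl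
    · apply Set.eq_empty_iff_forall_notMem.mpr
      rintro z ⟨hzS, hzde⟩
      have hzY : z = Y := de_X_sub hde hch hzde
      subst hzY
      exact (hMB1 hzS.1.1).2 rfl
    · intro p hdir
      by_contra hnb
      set n := p.k + 1 with hn
      set f : ℕ → V := fun j => if h : j < p.k + 2 then p.node ⟨j, h⟩ else p.node 0 with hf
      set ds : ℕ → Bool := fun j => if h : j < p.k + 1 then p.dir ⟨j, h⟩ else false with hds
      have hadjb : ∀ j, j < n → G.Adjb (ds j) (f j) (f (j+1)) := by
        intro j hj
        have hpa := p.adj ⟨j, hj⟩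
        have e1 : f j = p.node ⟨j, by omega⟩ := dif_pos (by omega)
        have e2 : f (j+1) = p.node ⟨j+1, by omega⟩ := dif_pos (by omega)
        have e3 : ds j = p.dir ⟨j, hj⟩ := dif_pos hj
        rw [e1, e2, e3]
        cases hdd : p.dir ⟨j, hj⟩ with
        | true =>
            have h2 := hpa.1 hdd
            show G.Adjb true _ _
            simp only [DiGraph.Adjb, if_true]
            exact h2
        | false =>
            have h2 := hpa.2 hdd
            show G.Adjb false _ _
            simp only [DiGraph.Adjb, Bool.false_eq_true, if_false]
            exact h2
      set w := OW.build n f ds hadjb with hw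
      have hlenw : w.len = n := OW.len_build
      have hfx : f 0 = X := by
        show (if h : 0 < p.k + 2 then p.node ⟨0, h⟩ else p.node 0) = X
        rw [dif_pos (by omega)]
        have h0 : (⟨0, by omega⟩ : Fin (p.k + 2)) = 0 := by
          apply Fin.ext
          simp
        rw [h0, p.first]
      have hfy : f n = Y := by
        show (if h : n < p.k + 2 then p.node ⟨n, h⟩ else p.node 0) = Y
        rw [dif_pos (by omega)]
        have h0 : (⟨n, by omega⟩ : Fin (p.k + 2)) = Fin.last (p.k + 1) := by
          apply Fin.ext
          simp [hn, Fin.last]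
        rw [h0, p.last]
      have hNw : w.sup.Nodup := by
        rw [List.nodup_iff_injective_get]
        intro i j hij
        have hsl : w.sup.length = p.k + 2 := by
          rw [OW.sup_length, hlenw, hn]
        have hi : (i : ℕ) < p.k + 2 := by
          have h1 := i.isLt
          omega
        have hjlt : (j : ℕ) < p.k + 2 := by
          have h1 := j.isLt
          omega
        have e1 : w.sup.get i = f i := by
          rw [List.get_eq_getElem]
          exact OW.sup_build_getElem n f ds hadjb i i.isLt
        have e2 : w.sup.get j = f j := by
          rw [List.get_eq_getElem]
          exact OW.sup_build_getElem n f ds hadjb j j.isLt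
        rw [e1, e2] at hij
        have e3 : f i = p.node ⟨(i : ℕ), hi⟩ := dif_pos hi
        have e4 : f j = p.node ⟨(j : ℕ), hjlt⟩ := dif_pos hjlt
        rw [e3, e4] at hij
        have h9 := p.inj hij
        have hv : (i : ℕ) = (j : ℕ) := by simpa using h9
        exact Fin.ext hv
      have hfdw : w.firstD = some false := by
        rw [OW.firstD_build (by omega : 0 < n)]
        have hds0 : ds 0 = false := by
          show (if h : 0 < p.k + 1 then p.dir ⟨0, h⟩ else false) = false
          rw [dif_pos (by omega)]
          have h0 : (⟨0, by omega⟩ : Fin (p.k + 1)) = 0 := by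
            apply Fin.ext
            simp
          rw [h0, hdir]
        rw [hds0]
      have hOpen : OW.OpenW ((MBY \ {X}) ∩ G.anc (Z ∪ {X, Y})) w := by
        intro tt htt hBA
        rw [OW.mem_triples_iff] at htt
        obtain ⟨j, hjlt, h1, h2, h3, h4, h5⟩ := htt
        rw [hlenw] at hjlt
        obtain ⟨tp, tm, tnn, td1, td2⟩ := tt
        simp only at h1 h2 h3 h4 h5
        subst h1
        subst h2
        subst h3
        subst h4
        subst h5
        have e1 : w.sup[j]'(by rw [OW.sup_length]; omega) = p.node ⟨j, by omega⟩ := by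
          rw [OW.sup_build_getElem]
          exact dif_pos (by omega)
        have e2 : w.sup[j+1]'(by rw [OW.sup_length]; omega) = p.node ⟨j+1, by omega⟩ := by
          rw [OW.sup_build_getElem]
          exact dif_pos (by omega)
        have e3 : w.sup[j+2]'(by rw [OW.sup_length]; omega) = p.node ⟨j+2, by omega⟩ := by
          rw [OW.sup_build_getElem]
          exact dif_pos (by omega)
        have e4 : w.dirs[j]'(by rw [OW.dirs_length]; omega) = p.dir ⟨j, by omega⟩ := by
          rw [OW.dirs_build_getElem]
          exact dif_pos (by omega)
        have e5 : w.dirs[j+1]'(by rw [OW.dirs_length]; omega) = p.dir ⟨j+1, by omega⟩ := by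
          rw [OW.dirs_build_getElem]
          exact dif_pos (by omega)
        rw [e1, e2, e3, e4, e5] at hBA
        exact hnb ⟨⟨j, by omega⟩, hBA⟩
      exact main_aux hde hch hXY hZsub hblock hMB1 hMB2 w hfx hfy hNw
        (by rw [hlenw]; omega) hfdw hOpen
  · rintro ⟨Z, hZsub, hadj⟩
    refine ⟨Z, ?_, hadj⟩
    intro z hz
    have h1 := hZsub hz
    have h2 := hMB1 h1.1
    refine ⟨h2.1, ?_⟩
    intro hmem
    simp only [Set.mem_insert_iff, Set.mem_singleton_iff] at hmem
    rcases hmem with rfl | rfl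
    · exact h1.2 rfl
    · exact h2.2 rfl
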